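/- arXiv:1311.2491 — 8 statements merged into one kernel-verified Lean document; each statement's English description precedes it below -/
import Mathlib

section
/- Let f : [1,∞) → ℝ be non-negative and non-decreasing, and let F(x) = Σ_{n ≤ x} f(x/n). If there exist real constants A, B such that F(x) = A·x·log x + B·x + o(x) as x → ∞, then f(x) = O(x) as x → ∞. -/
open Filter Real Finset Asymptotics

lemma mt_aux_key (f : ℝ → ℝ) (hnonneg : ∀ x, 1 ≤ x → 0 ≤ f x)
    (hmono : ∀ x y, 1 ≤ x → x ≤ y → f x ≤ f y) (x : ℝ) (hx : 2 ≤ x) :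
    f x - f (x / 2) ≤ (∑ n ∈ Finset.Icc 1 ⌊x⌋₊, f (x / n))
      - 2 * ∑ n ∈ Finset.Icc 1 ⌊x / 2⌋₊, f (x / 2 / n) := by
  have hx0 : (0:ℝ) < x := by linarith
  set N := ⌊x⌋₊ with hN
  set M := ⌊x / 2⌋₊ with hM
  have heq : M = N / 2 := by
    rw [hM, hN, show (2:ℝ) = ((2:ℕ):ℝ) by norm_num, Nat.floor_div_natCast]
  have hM1 : 1 ≤ M := by
    rw [hM]
    exact Nat.one_le_floor_iff _ |>.mpr (by linarith)
  have hMx : (M : ℝ) ≤ x / 2 := Nat.floor_le (by linarith)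
  -- nonnegativity of terms
  have hterm : ∀ n ∈ Finset.Icc 1 N, 0 ≤ f (x / n) := by
    intro n hn
    rw [Finset.mem_Icc] at hn
    apply hnonneg
    rw [le_div_iff₀ (by exact_mod_cast Nat.lt_of_lt_of_le Nat.zero_lt_one hn.1)]
    calc (1:ℝ) * n = n := one_mul _
    _ ≤ N := by exact_mod_cast hn.2
    _ ≤ x := Nat.floor_le hx0.le
  -- split into even and odd
  have hsplit := Finset.sum_filter_add_sum_filter_not (Finset.Icc 1 N)
    (fun n => Even n) (fun n => f (x / n))
  -- even part equals F(x/2)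
  have himg : (Finset.Icc 1 N).filter (fun n => Even n)
      = (Finset.Icc 1 M).image (fun m => 2 * m) := by
    ext n
    simp only [Finset.mem_filter, Finset.mem_Icc, Finset.mem_image, Nat.even_iff]
    constructor
    · rintro ⟨⟨h1, h2⟩, h3⟩
      exact ⟨n / 2, by omega, by omega⟩
    · rintro ⟨m, ⟨h1, h2⟩, rfl⟩
      omega
  have heven : ∑ n ∈ (Finset.Icc 1 N).filter (fun n => Even n), f (x / n)
      = ∑ m ∈ Finset.Icc 1 M, f (x / 2 / m) := by
    rw [himg, Finset.sum_image (fun a _ b _ h => by omega)]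
    apply Finset.sum_congr rfl
    intro m hm
    congr 1
    push_cast
    rw [div_div]
  -- odd part lower bound
  have hoddsub : insert 1 ((Finset.Icc 2 M).image (fun m => 2 * m - 1))
      ⊆ (Finset.Icc 1 N).filter (fun n => ¬ Even n) := by
    intro n hn
    simp only [Finset.mem_insert, Finset.mem_image, Finset.mem_Icc] at hn
    simp only [Finset.mem_filter, Finset.mem_Icc, Nat.even_iff]
    rcases hn with rfl | ⟨m, ⟨h1, h2⟩, rfl⟩
    · omega
    · omega
  have h1notin : (1:ℕ) ∉ (Finset.Icc 2 M).image (fun m => 2 * m - 1) := by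
    simp only [Finset.mem_image, Finset.mem_Icc]
    rintro ⟨m, ⟨h1, h2⟩, h3⟩
    omega
  have hodd : f x + ∑ m ∈ Finset.Icc 2 M, f (x / 2 / m)
      ≤ ∑ n ∈ (Finset.Icc 1 N).filter (fun n => ¬ Even n), f (x / n) := by
    have hle1 : f x + ∑ m ∈ Finset.Icc 2 M, f (x / 2 / m)
        ≤ ∑ n ∈ (insert 1 ((Finset.Icc 2 M).image (fun m => 2 * m - 1)) : Finset ℕ), f (x / n) := by
      rw [Finset.sum_insert h1notin,
        Finset.sum_image (fun a ha b hb h => by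
          simp only [Finset.coe_Icc, Set.mem_Icc] at ha hb; omega)]
      simp only [Nat.cast_one, div_one]
      gcongr with m hm
      rw [Finset.mem_Icc] at hm
      have hm2 : (2:ℝ) ≤ m := by exact_mod_cast hm.1
      have hmM : (m:ℝ) ≤ M := by exact_mod_cast hm.2
      have hcast : ((2 * m - 1 : ℕ) : ℝ) = 2 * (m:ℝ) - 1 := by
        push_cast [Nat.cast_sub (by omega : 1 ≤ 2 * m)]
        ring
      apply hmono
      · rw [div_div, le_div_iff₀ (by positivity)]
        nlinarith [hMx]
      · rw [div_div, hcast]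
        apply div_le_div_of_nonneg_left hx0.le (by linarith)
        linarith
    refine hle1.trans (Finset.sum_le_sum_of_subset_of_nonneg hoddsub ?_)
    intro n hn _
    exact hterm n (Finset.mem_filter.mp hn).1
  -- Icc 1 M = insert 1 (Icc 2 M)
  have hIcc : Finset.Icc 1 M = insert 1 (Finset.Icc 2 M) := by
    ext n
    simp only [Finset.mem_Icc, Finset.mem_insert]
    omega
  have hFhalf : ∑ m ∈ Finset.Icc 1 M, f (x / 2 / m)
      = f (x / 2) + ∑ m ∈ Finset.Icc 2 M, f (x / 2 / m) := by
    rw [hIcc, Finset.sum_insert (by simp)]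
    norm_num
  linarith [hsplit, heven, hodd, hFhalf]

theorem moebius_transform_estimate_f_bigO
    (f : ℝ → ℝ) (A B : ℝ)
    (hnonneg : ∀ x, 1 ≤ x → 0 ≤ f x)
    (hmono : ∀ x y, 1 ≤ x → x ≤ y → f x ≤ f y)
    (hF : (fun x : ℝ =>
        (∑ n ∈ Finset.Icc 1 ⌊x⌋₊, f (x / n)) - (A * x * Real.log x + B * x))
      =o[atTop] fun x : ℝ => x) :
    f =O[atTop] fun x : ℝ => x := by
  set F : ℝ → ℝ := fun x => ∑ n ∈ Finset.Icc 1 ⌊x⌋₊, f (x / n) with hFdef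
  set E : ℝ → ℝ := fun x => F x - (A * x * Real.log x + B * x) with hEdef
  -- E(x/2) is o(x)
  have ht : Tendsto (fun x : ℝ => x / 2) atTop atTop :=
    Tendsto.atTop_div_const two_pos tendsto_id
  have hhalf : (fun x : ℝ => x / 2) =O[atTop] fun x : ℝ => x := by
    apply Asymptotics.isBigO_of_le
    intro x
    rw [Real.norm_eq_abs, Real.norm_eq_abs, abs_div]
    rw [abs_two]
    linarith [abs_nonneg x]
  have hE2 : (fun x : ℝ => E (x / 2)) =o[atTop] fun x : ℝ => x :=
    (hF.comp_tendsto ht).trans_isBigO hhalf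
  -- H := F x - 2 F(x/2) is O(x)
  have hH : (fun x : ℝ => F x - 2 * F (x / 2)) =O[atTop] fun x : ℝ => x := by
    have h1 : (fun x : ℝ => E x - 2 * E (x / 2) + A * Real.log 2 * x)
        =O[atTop] fun x : ℝ => x := by
      refine IsBigO.add (IsBigO.sub hF.isBigO ?_) ?_
      · exact (hE2.isBigO.const_mul_left 2)
      · exact (isBigO_refl _ _).const_mul_left _
    refine h1.congr' ?_ EventuallyEq.rfl
    filter_upwards [eventually_ge_atTop (1:ℝ)] with x hx1
    have hx0 : (0:ℝ) < x := by linarith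
    have hlog : Real.log (x / 2) = Real.log x - Real.log 2 :=
      Real.log_div (ne_of_gt hx0) two_ne_zero
    simp only [hEdef]
    rw [hlog]
    ring
  obtain ⟨C, hC⟩ := hH.bound
  rw [eventually_atTop] at hC
  obtain ⟨x1, hx1⟩ := hC
  set x0 : ℝ := max x1 2 with hx0def
  set C' : ℝ := |C| + 1 with hC'def
  have hC'pos : 0 < C' := by positivity
  have hx02 : (2:ℝ) ≤ x0 := le_max_right _ _
  have hstep : ∀ x : ℝ, x0 ≤ x → f x - f (x / 2) ≤ C' * x := by
    intro x hx
    have hx2 : (2:ℝ) ≤ x := le_trans hx02 hx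
    have hxpos : (0:ℝ) < x := by linarith
    have h1 := mt_aux_key f hnonneg hmono x hx2
    have h2 := hx1 x (le_trans (le_max_left _ _) hx)
    rw [Real.norm_eq_abs, Real.norm_eq_abs, abs_of_pos hxpos] at h2
    have h3 : F x - 2 * F (x / 2) ≤ |F x - 2 * F (x / 2)| := le_abs_self _
    have h4 : C * x ≤ C' * x := by
      apply mul_le_mul_of_nonneg_right _ hxpos.le
      rw [hC'def]
      have := le_abs_self C
      linarith
    calc f x - f (x / 2) ≤ F x - 2 * F (x / 2) := h1
    _ ≤ |F x - 2 * F (x/2)| := h3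
    _ ≤ C * x := h2
    _ ≤ C' * x := h4
  -- induction
  have hkey : ∀ n : ℕ, ∀ x : ℝ, 1 ≤ x → ⌊x⌋₊ ≤ n → f x ≤ 2 * C' * x + f (2 * x0) := by
    intro n
    induction n with
    | zero =>
      intro x hx hfl
      exfalso
      have : 1 ≤ ⌊x⌋₊ := Nat.one_le_floor_iff _ |>.mpr hx
      omega
    | succ n ih =>
      intro x hx hfl
      by_cases hcase : x ≤ 2 * x0
      · have := hmono x (2 * x0) hx hcase
        nlinarith [hnonneg x hx]
      · push_neg at hcase
        have hx4 : (4:ℝ) ≤ x := by linarith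
        have hxx0 : x0 ≤ x := by linarith
        have hhalf1 : (1:ℝ) ≤ x / 2 := by linarith
        have hfloor : ⌊x / 2⌋₊ < ⌊x⌋₊ := by
          have h5 : (⌊x / 2⌋₊ : ℝ) ≤ x / 2 := Nat.floor_le (by linarith)
          have h6 : x - 1 < (⌊x⌋₊ : ℝ) := Nat.sub_one_lt_floor x
          have : (⌊x / 2⌋₊ : ℝ) < (⌊x⌋₊ : ℝ) := by linarith
          exact_mod_cast this
        have ihx := ih (x / 2) hhalf1 (by omega)
        have hs := hstep x hxx0
        nlinarith
  have hbound : ∀ x : ℝ, 1 ≤ x → f x ≤ 2 * C' * x + f (2 * x0) :=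
    fun x hx => hkey ⌊x⌋₊ x hx le_rfl
  -- conclude
  rw [Asymptotics.isBigO_iff]
  refine ⟨2 * C' + |f (2 * x0)|, ?_⟩
  filter_upwards [eventually_ge_atTop (1:ℝ)] with x hx
  rw [Real.norm_eq_abs, Real.norm_eq_abs, abs_of_pos (by linarith : (0:ℝ) < x),
    abs_of_nonneg (hnonneg x hx)]
  have h1 := hbound x hx
  have h2 : f (2 * x0) ≤ |f (2 * x0)| := le_abs_self _
  nlinarith [abs_nonneg (f (2 * x0))]
end

section
/- Let f : [1,∞) → ℝ be non-negative, non-decreasing and right-continuous, and let F(x) = Σ_{n ≤ x} f(x/n). If there exist real constants A, B such that F(x) = A·x·log x + B·x + o(x) as x → ∞, then the Lebesgue–Stieltjes integral ∫_{[1,x]} (1/t) dμ_f(t), where μ_f is the Lebesgue–Stieltjes measure associated to f (extended by f(1) on [0,1)), satisfies ∫_{[1,x]} (1/t) dμ_f(t) = A·log x + O(1) as x → ∞. -/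
open Filter Real Finset MeasureTheory

set_option linter.unnecessarySeqFocus false


lemma alt_nonneg : ∀ (N : ℕ) (a : ℕ → ℝ), (∀ n, 1 ≤ n → n ≤ N → 0 ≤ a n) →
    (∀ m n, 1 ≤ m → m ≤ n → n ≤ N → a n ≤ a m) →
    0 ≤ ∑ n ∈ Icc 1 N, (-1 : ℝ)^(n+1) * a n := by
  intro N
  induction N using Nat.strong_induction_on with
  | _ N ih =>
    intro a ha hmono
    match N with
    | 0 => simp
    | 1 => simpa using ha 1 le_rfl le_rfl
    | (M+2) =>
      have hsplit : ∑ n ∈ Icc 1 (M+2), (-1:ℝ)^(n+1) * a n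
          = (∑ n ∈ Icc 1 2, (-1:ℝ)^(n+1) * a n) + ∑ n ∈ Icc 3 (M+2), (-1:ℝ)^(n+1) * a n := by
        rw [show (Icc 1 (M+2) : Finset ℕ) = Ioc 0 (M+2) from rfl,
          show (Icc 1 2 : Finset ℕ) = Ioc 0 2 from rfl,
          show (Icc 3 (M+2) : Finset ℕ) = Ioc 2 (M+2) from by rw [← Finset.Icc_add_one_left_eq_Ioc]; rfl,
          Finset.sum_Ioc_consecutive _ (by omega) (by omega)]
      have hshift : ∑ n ∈ Icc 3 (M+2), (-1:ℝ)^(n+1) * a n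
          = ∑ k ∈ Icc 1 M, (-1:ℝ)^(k+1) * a (k+2) := by
        rw [show (Icc 3 (M+2) : Finset ℕ) = map (addLeftEmbedding 2) (Icc 1 M) from by
          rw [Finset.map_add_left_Icc]; congr 1 <;> omega, Finset.sum_map]
        apply Finset.sum_congr rfl
        intro k hk
        simp only [addLeftEmbedding_apply]
        rw [show 2 + k = k + 2 from by omega]
        rw [show k + 2 + 1 = (k + 1) + 2 from by omega, pow_add]
        ring
      have h1 : 0 ≤ ∑ k ∈ Icc 1 M, (-1:ℝ)^(k+1) * a (k+2) := by
        apply ih M (by omega)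
        · intro n h1 h2; exact ha (n+2) (by omega) (by omega)
        · intro m n h1 h2 h3; exact hmono (m+2) (n+2) (by omega) (by omega) (by omega)
      have h2 : 0 ≤ ∑ n ∈ Icc 1 2, (-1:ℝ)^(n+1) * a n := by
        rw [show (Icc 1 2 : Finset ℕ) = {1, 2} from rfl]
        rw [Finset.sum_insert (by simp), Finset.sum_singleton]
        have := hmono 1 2 le_rfl (by omega) (by omega)
        norm_num
        linarith
      rw [hsplit, hshift]
      linarith

lemma alt_ge (N : ℕ) (hN : 2 ≤ N) (a : ℕ → ℝ) (ha : ∀ n, 1 ≤ n → n ≤ N → 0 ≤ a n)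
    (hmono : ∀ m n, 1 ≤ m → m ≤ n → n ≤ N → a n ≤ a m) :
    a 1 - a 2 ≤ ∑ n ∈ Icc 1 N, (-1 : ℝ)^(n+1) * a n := by
  obtain ⟨M, rfl⟩ : ∃ M, N = M + 2 := ⟨N - 2, by omega⟩
  have hsplit : ∑ n ∈ Icc 1 (M+2), (-1:ℝ)^(n+1) * a n
      = (∑ n ∈ Icc 1 2, (-1:ℝ)^(n+1) * a n) + ∑ n ∈ Icc 3 (M+2), (-1:ℝ)^(n+1) * a n := by
    rw [show (Icc 1 (M+2) : Finset ℕ) = Ioc 0 (M+2) from rfl,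
      show (Icc 1 2 : Finset ℕ) = Ioc 0 2 from rfl,
      show (Icc 3 (M+2) : Finset ℕ) = Ioc 2 (M+2) from by rw [← Finset.Icc_add_one_left_eq_Ioc]; rfl,
      Finset.sum_Ioc_consecutive _ (by omega) (by omega)]
  have hshift : ∑ n ∈ Icc 3 (M+2), (-1:ℝ)^(n+1) * a n
      = ∑ k ∈ Icc 1 M, (-1:ℝ)^(k+1) * a (k+2) := by
    rw [show (Icc 3 (M+2) : Finset ℕ) = map (addLeftEmbedding 2) (Icc 1 M) from by
      rw [Finset.map_add_left_Icc]; congr 1 <;> omega, Finset.sum_map]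
    apply Finset.sum_congr rfl
    intro k hk
    simp only [addLeftEmbedding_apply]
    rw [show 2 + k = k + 2 from by omega]
    rw [show k + 2 + 1 = (k + 1) + 2 from by omega, pow_add]
    ring
  have h1 : 0 ≤ ∑ k ∈ Icc 1 M, (-1:ℝ)^(k+1) * a (k+2) := by
    apply alt_nonneg M
    · intro n h1 h2; exact ha (n+2) (by omega) (by omega)
    · intro m n h1 h2 h3; exact hmono (m+2) (n+2) (by omega) (by omega) (by omega)
  have h2 : ∑ n ∈ Icc 1 2, (-1:ℝ)^(n+1) * a n = a 1 - a 2 := by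
    rw [show (Icc 1 2 : Finset ℕ) = {1, 2} from rfl]
    rw [Finset.sum_insert (by simp), Finset.sum_singleton]
    norm_num
    ring
  rw [hsplit, hshift, h2]
  linarith

lemma even_filter_sum (f : ℝ → ℝ) (x : ℝ) (hx : 0 ≤ x) :
    ∑ n ∈ (Icc 1 ⌊x⌋₊).filter (fun n => Even n), f (x / n)
      = ∑ m ∈ Icc 1 ⌊x/2⌋₊, f ((x/2) / m) := by
  apply Finset.sum_nbij' (fun n => n / 2) (fun m => 2 * m)
  · intro n hn
    simp only [Finset.mem_filter, Finset.mem_Icc] at hn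
    obtain ⟨⟨h1, h2⟩, k, hk⟩ := hn
    simp only [Finset.mem_Icc]
    constructor
    · omega
    · rw [Nat.le_floor_iff (by positivity)]
      have hn2 : (n : ℝ) ≤ x := le_trans (Nat.cast_le.2 h2) (Nat.floor_le hx)
      have : (n / 2 : ℕ) = k := by omega
      rw [this]
      rw [le_div_iff₀ (by norm_num)]
      calc (k : ℝ) * 2 = (n : ℝ) := by rw [hk]; push_cast; ring
        _ ≤ x := hn2
  · intro m hm
    simp only [Finset.mem_Icc] at hm
    simp only [Finset.mem_filter, Finset.mem_Icc]
    have hm2 : (m : ℝ) ≤ x / 2 := le_trans (Nat.cast_le.2 hm.2) (Nat.floor_le (by positivity))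
    refine ⟨⟨by omega, ?_⟩, ⟨m, by omega⟩⟩
    rw [Nat.le_floor_iff hx]
    push_cast
    linarith
  · intro n hn
    simp only [Finset.mem_filter] at hn
    obtain ⟨_, k, hk⟩ := hn
    omega
  · intro m hm; omega
  · intro n hn
    simp only [Finset.mem_filter, Finset.mem_Icc] at hn
    obtain ⟨⟨h1, h2⟩, k, hk⟩ := hn
    have hn2 : n / 2 = k := by omega
    rw [hn2, div_div]
    congr 1
    rw [hk]
    push_cast
    ring

lemma alt_identity (f : ℝ → ℝ) (x : ℝ) (hx : 0 ≤ x) :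
    (∑ n ∈ Icc 1 ⌊x⌋₊, f (x/n)) - 2 * ∑ m ∈ Icc 1 ⌊x/2⌋₊, f ((x/2)/m)
      = ∑ n ∈ Icc 1 ⌊x⌋₊, (-1:ℝ)^(n+1) * f (x/n) := by
  rw [← even_filter_sum f x hx]
  rw [← Finset.sum_filter_add_sum_filter_not (Icc 1 ⌊x⌋₊) (fun n => Even n) (fun n => f (x/n))]
  rw [show ∑ n ∈ Icc 1 ⌊x⌋₊, (-1:ℝ)^(n+1) * f (x/n)
      = (∑ n ∈ (Icc 1 ⌊x⌋₊).filter (fun n => Even n), (-1:ℝ)^(n+1) * f (x/n))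
        + ∑ n ∈ (Icc 1 ⌊x⌋₊).filter (fun n => ¬ Even n), (-1:ℝ)^(n+1) * f (x/n) from
    (Finset.sum_filter_add_sum_filter_not _ _ _).symm]
  have he : ∑ n ∈ (Icc 1 ⌊x⌋₊).filter (fun n => Even n), (-1:ℝ)^(n+1) * f (x/n)
      = - ∑ n ∈ (Icc 1 ⌊x⌋₊).filter (fun n => Even n), f (x/n) := by
    rw [← Finset.sum_neg_distrib]
    apply Finset.sum_congr rfl
    intro n hn
    simp only [Finset.mem_filter] at hn
    rw [(hn.2.add_one).neg_one_pow]
    ring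
  have ho : ∑ n ∈ (Icc 1 ⌊x⌋₊).filter (fun n => ¬ Even n), (-1:ℝ)^(n+1) * f (x/n)
      = ∑ n ∈ (Icc 1 ⌊x⌋₊).filter (fun n => ¬ Even n), f (x/n) := by
    apply Finset.sum_congr rfl
    intro n hn
    simp only [Finset.mem_filter] at hn
    rw [(Nat.not_even_iff_odd.1 hn.2).add_one.neg_one_pow]
    ring
  rw [he, ho]
  ring

lemma cheb (f : ℝ → ℝ) (A B : ℝ)
    (hnonneg : ∀ x, 1 ≤ x → 0 ≤ f x)
    (hmono : ∀ x y, 1 ≤ x → x ≤ y → f x ≤ f y)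
    (hF : (fun x : ℝ =>
        (∑ n ∈ Finset.Icc 1 ⌊x⌋₊, f (x / n)) - (A * x * Real.log x + B * x))
      =o[atTop] fun x : ℝ => x) :
    ∃ C, 0 ≤ C ∧ ∀ x, 1 ≤ x → f x ≤ C * x := by
  have hev := (Asymptotics.isLittleO_iff.1 hF) (c := 1) one_pos
  rw [eventually_atTop] at hev
  obtain ⟨X0, hX0⟩ := hev
  set Y : ℝ := max X0 2 with hY
  set X1 : ℝ := 2 * Y with hX1
  have hY2 : 2 ≤ Y := le_max_right _ _
  have hYX0 : X0 ≤ Y := le_max_left _ _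
  have hX14 : 4 ≤ X1 := by simp only [hX1]; linarith
  have habs : ∀ z, Y ≤ z →
      |(∑ n ∈ Finset.Icc 1 ⌊z⌋₊, f (z / n)) - (A * z * Real.log z + B * z)| ≤ z := by
    intro z hz
    have h0 : (0:ℝ) ≤ z := by linarith
    have := hX0 z (le_trans hYX0 hz)
    rw [Real.norm_eq_abs, Real.norm_eq_abs, one_mul, abs_of_nonneg h0] at this
    exact this
  have hstep : ∀ x, X1 ≤ x → f x - f (x/2) ≤ (|A| + 2) * x := by
    intro x hx
    have hx4 : 4 ≤ x := le_trans hX14 hx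
    have hx0 : 0 < x := by linarith
    have hxhalf : Y ≤ x / 2 := by
      rw [hX1] at hx; linarith
    have hfl2 : 2 ≤ ⌊x⌋₊ := by
      rw [Nat.le_floor_iff (le_of_lt hx0)]; norm_num; linarith
    have hterm : ∀ n : ℕ, 1 ≤ n → n ≤ ⌊x⌋₊ → 1 ≤ x / n := by
      intro n h1 h2
      have hn0 : (0:ℝ) < n := by exact_mod_cast h1
      rw [le_div_iff₀ hn0]
      have : (n:ℝ) ≤ x := le_trans (Nat.cast_le.2 h2) (Nat.floor_le (le_of_lt hx0))
      linarith
    have halt : f x - f (x/2) ≤ ∑ n ∈ Icc 1 ⌊x⌋₊, (-1:ℝ)^(n+1) * f (x/n) := by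
      have := alt_ge ⌊x⌋₊ hfl2 (fun n => f (x/n))
        (fun n h1 h2 => hnonneg _ (hterm n h1 h2))
        (fun m n h1 h2 h3 => by
          apply hmono _ _ (hterm n (le_trans h1 h2) h3)
          apply div_le_div_of_nonneg_left (le_of_lt hx0)
          · exact_mod_cast lt_of_lt_of_le Nat.zero_lt_one h1
          · exact_mod_cast h2)
      simpa using this
    rw [← alt_identity f x (le_of_lt hx0)] at halt
    have h1 := abs_le.1 (habs x (by rw [hX1] at hx; linarith))
    have h2 := abs_le.1 (habs (x/2) hxhalf)
    have hlog : Real.log (x/2) = Real.log x - Real.log 2 :=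
      Real.log_div (ne_of_gt hx0) two_ne_zero
    have hlog2a : (0:ℝ) ≤ Real.log 2 := Real.log_nonneg (by norm_num)
    have hlog2b : Real.log 2 ≤ 1 := by
      have := Real.log_two_lt_d9; linarith
    have hAabs : A ≤ |A| := le_abs_self A
    have hAabs' : -A ≤ |A| := neg_le_abs A
    have expand : A * (x/2) * Real.log (x/2) = A * x * Real.log x / 2 - A * x * Real.log 2 / 2 := by
      rw [hlog]; ring
    nlinarith [h1.2, h2.1, mul_le_mul_of_nonneg_left hlog2b (abs_nonneg A),
      mul_nonneg (mul_nonneg (abs_nonneg A) (le_of_lt hx0)) hlog2a,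
      mul_le_mul_of_nonneg_right hAabs' (mul_nonneg hx0.le hlog2a),
      mul_le_mul_of_nonneg_right hAabs (mul_nonneg hx0.le hlog2a)]
  -- induction
  set C1 : ℝ := |A| + 2 with hC1
  have hC1pos : 0 ≤ C1 := by positivity
  have hind : ∀ n : ℕ, ∀ x, 1 ≤ x → x ≤ 2^n * X1 → f x ≤ 2 * C1 * x + f X1 := by
    intro n
    induction n with
    | zero =>
      intro x hx1 hx2
      simp only [pow_zero, one_mul] at hx2
      have := hmono x X1 hx1 hx2
      nlinarith
    | succ n ih =>
      intro x hx1 hx2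
      by_cases hxX1 : x ≤ X1
      · have := hmono x X1 hx1 hxX1
        nlinarith
      · push_neg at hxX1
        have hhalf1 : 1 ≤ x / 2 := by linarith [le_trans hX14 hxX1.le]
        have hhalf2 : x / 2 ≤ 2^n * X1 := by
          rw [pow_succ] at hx2; linarith
        have := ih (x/2) hhalf1 hhalf2
        have hs := hstep x hxX1.le
        nlinarith
  have hX11 : 1 ≤ X1 := by linarith
  have hfX1 : 0 ≤ f X1 := hnonneg X1 hX11
  refine ⟨2 * C1 + f X1, by linarith, ?_⟩
  intro x hx
  obtain ⟨n, hn⟩ := pow_unbounded_of_one_lt (x / X1) one_lt_two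
  have hX1pos : (0:ℝ) < X1 := by linarith
  have hxle : x ≤ 2^n * X1 := by
    rw [div_lt_iff₀ hX1pos] at hn; nlinarith
  have := hind n x hx hxle
  nlinarith


set_option maxHeartbeats 1600000 in
/-- Mertens-type estimate for the Lebesgue–Stieltjes integral `∫_{[1,x]} dμ_f(t)/t`,
where `μ_f` is the Lebesgue–Stieltjes measure of the non-decreasing right-continuous
function `f` on `[1,∞)`, extended by the constant value `f 1` to the left of `1`. -/
theorem moebius_transform_estimate_stieltjes
    (f : ℝ → ℝ) (A B : ℝ) (σ : StieltjesFunction ℝ)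
    (hnonneg : ∀ x, 1 ≤ x → 0 ≤ f x)
    (hmono : ∀ x y, 1 ≤ x → x ≤ y → f x ≤ f y)
    (hσ : ∀ x : ℝ, σ x = f (max x 1))
    (hF : (fun x : ℝ =>
        (∑ n ∈ Finset.Icc 1 ⌊x⌋₊, f (x / n)) - (A * x * Real.log x + B * x))
      =o[atTop] fun x : ℝ => x) :
    (fun x : ℝ => (∫ t in Set.Icc 1 x, (1 / t) ∂σ.measure) - A * Real.log x)
      =O[atTop] fun _ : ℝ => (1 : ℝ) := by
  obtain ⟨C, hC0, hC⟩ := cheb f A B hnonneg hmono hF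
  have hf1 : 0 ≤ f 1 := hnonneg 1 le_rfl
  have hσ1 : ∀ y : ℝ, 1 ≤ y → σ y = f y := fun y hy => by rw [hσ, max_eq_left hy]
  have hleft : Function.leftLim (⇑σ) 1 = f 1 := by
    apply leftLim_eq_of_tendsto
    have heq : Set.EqOn (fun _ : ℝ => f 1) (⇑σ) (Set.Iio 1) := fun t ht => by
      simp only; rw [hσ, max_eq_right (le_of_lt ht)]
    exact Filter.Tendsto.congr'
      (eventually_of_mem self_mem_nhdsWithin fun t ht => heq ht) tendsto_const_nhds
  have hmeasIcc : ∀ y : ℝ, 1 ≤ y →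
      σ.measure (Set.Icc 1 y) = ENNReal.ofReal (f y - f 1) := fun y hy => by
    rw [StieltjesFunction.measure_Icc, hleft, hσ1 y hy]
  have hmeasReal : ∀ y : ℝ, 1 ≤ y →
      (σ.measure (Set.Icc 1 y)).toReal = f y - f 1 := fun y hy => by
    rw [hmeasIcc y hy, ENNReal.toReal_ofReal (by linarith [hmono 1 y le_rfl hy])]
  obtain ⟨X0, hX0⟩ := eventually_atTop.1 ((Asymptotics.isLittleO_iff.1 hF) one_pos)
  rw [Asymptotics.isBigO_iff]
  refine ⟨1 + |B| + f 1 + C, ?_⟩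
  filter_upwards [eventually_ge_atTop (max X0 1)] with x hx
  have hx1 : (1:ℝ) ≤ x := le_trans (le_max_right _ _) hx
  have hxX0 : X0 ≤ x := le_trans (le_max_left _ _) hx
  have hx0 : (0:ℝ) < x := by linarith
  have hfinx : σ.measure (Set.Icc 1 x) ≠ ⊤ := by
    rw [hmeasIcc x hx1]; exact ENNReal.ofReal_ne_top
  have hfinx' : σ.measure (Set.Icc 1 x) < ⊤ := lt_top_iff_ne_top.2 hfinx
  -- integrability of 1/t
  have h_int_inv : IntegrableOn (fun t : ℝ => 1 / t) (Set.Icc 1 x) σ.measure := by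
    apply Measure.integrableOn_of_bounded hfinx
      ((measurable_const.div measurable_id : Measurable fun t : ℝ => (1:ℝ) / t).aestronglyMeasurable) (M := 1)
    apply ae_restrict_of_forall_mem measurableSet_Icc
    intro t ht
    have ht0 : (0:ℝ) < t := by linarith [ht.1]
    simp only [Pi.div_apply]
    rw [Real.norm_eq_abs, abs_of_nonneg (div_nonneg zero_le_one ht0.le)]
    exact (div_le_one ht0).2 (by linarith [ht.1])
  set N := ⌊x⌋₊ with hNdef
  have hN1 : 1 ≤ N := Nat.le_floor (by exact_mod_cast hx1)
  have h_int_ind : ∀ n ∈ Finset.Icc 1 N,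
      Integrable (fun t : ℝ => (Set.Icc (1:ℝ) (x / n)).indicator (fun _ => (1:ℝ)) t)
        (σ.measure.restrict (Set.Icc 1 x)) := by
    intro n _
    rw [integrable_indicator_iff measurableSet_Icc]
    apply (integrableOn_const_iff (by simp)).2
    right
    rw [Measure.restrict_apply measurableSet_Icc]
    exact lt_of_le_of_lt (measure_mono Set.inter_subset_right) hfinx'
  set g : ℝ → ℝ :=
    fun t => ∑ n ∈ Finset.Icc 1 N, (Set.Icc (1:ℝ) (x / n)).indicator (fun _ => (1:ℝ)) t
    with hgdef
  have h_int_g : IntegrableOn g (Set.Icc 1 x) σ.measure := integrable_finset_sum _ h_int_ind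
  have hxn : ∀ n : ℕ, n ∈ Finset.Icc 1 N → 1 ≤ x / n ∧ x / n ≤ x := by
    intro n hn
    rw [Finset.mem_Icc] at hn
    have hn0 : (0:ℝ) < n := by exact_mod_cast hn.1
    have hn1 : (1:ℝ) ≤ n := by exact_mod_cast hn.1
    have hnx : (n:ℝ) ≤ x := le_trans (Nat.cast_le.2 hn.2) (Nat.floor_le hx0.le)
    constructor
    · rw [le_div_iff₀ hn0]; linarith
    · rw [div_le_iff₀ hn0]; nlinarith
  have hgval : ∫ t in Set.Icc 1 x, g t ∂σ.measure
      = (∑ n ∈ Finset.Icc 1 N, f (x / n)) - N * f 1 := by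
    simp only [hgdef]
    rw [integral_finset_sum _ h_int_ind]
    have heach : ∀ n ∈ Finset.Icc 1 N,
        ∫ t in Set.Icc 1 x, (Set.Icc (1:ℝ) (x / n)).indicator (fun _ => (1:ℝ)) t ∂σ.measure
          = f (x / n) - f 1 := by
      intro n hn
      rw [setIntegral_indicator measurableSet_Icc, setIntegral_const, smul_eq_mul, mul_one,
        Set.Icc_inter_Icc, sup_idem, inf_eq_right.2 (hxn n hn).2, measureReal_def, hmeasReal _ (hxn n hn).1]
    rw [Finset.sum_congr rfl heach, Finset.sum_sub_distrib, Finset.sum_const, Nat.card_Icc,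
      Nat.add_sub_cancel, nsmul_eq_mul]
  have hg_eq : ∀ t ∈ Set.Icc (1:ℝ) x, g t = (⌊x / t⌋₊ : ℝ) := by
    intro t ht
    obtain ⟨ht1, htx⟩ := ht
    have ht0 : (0:ℝ) < t := by linarith
    have hKN : ⌊x / t⌋₊ ≤ N := Nat.floor_le_floor (by rw [div_le_iff₀ ht0]; nlinarith)
    have hterm : ∀ n ∈ Finset.Icc 1 N,
        (Set.Icc (1:ℝ) (x / n)).indicator (fun _ => (1:ℝ)) t
          = if n ≤ ⌊x / t⌋₊ then 1 else 0 := by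
      intro n hn
      rw [Finset.mem_Icc] at hn
      have hn0 : (0:ℝ) < n := by exact_mod_cast hn.1
      by_cases hcase : n ≤ ⌊x / t⌋₊
      · rw [if_pos hcase, Set.indicator_of_mem]
        refine ⟨ht1, ?_⟩
        rw [le_div_iff₀ hn0]
        have h1 : (n:ℝ) ≤ x / t :=
          le_trans (Nat.cast_le.2 hcase) (Nat.floor_le (div_nonneg hx0.le ht0.le))
        rw [le_div_iff₀ ht0] at h1
        nlinarith
      · rw [if_neg hcase, Set.indicator_of_notMem]
        intro hmem
        apply hcase
        apply Nat.le_floor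
        rw [le_div_iff₀ ht0]
        have h2 := hmem.2
        rw [le_div_iff₀ hn0] at h2
        nlinarith
    simp only [hgdef]
    rw [Finset.sum_congr rfl hterm, Finset.sum_boole]
    norm_cast
    rw [show (Finset.Icc 1 N).filter (fun n => n ≤ ⌊x / t⌋₊) = Finset.Icc 1 ⌊x / t⌋₊ from by
      ext m; simp only [Finset.mem_filter, Finset.mem_Icc]; omega]
    rw [Nat.card_Icc, Nat.add_sub_cancel]
  have h_int_div : IntegrableOn (fun t : ℝ => x / t) (Set.Icc 1 x) σ.measure := by
    have h := h_int_inv.const_mul x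
    simpa [mul_one_div, div_eq_mul_inv, IntegrableOn] using h
  have h_int_one : IntegrableOn (fun _ : ℝ => (1:ℝ)) (Set.Icc 1 x) σ.measure :=
    integrableOn_const hfinx
  have hxdiv : ∫ t in Set.Icc 1 x, x / t ∂σ.measure
      = x * ∫ t in Set.Icc 1 x, 1 / t ∂σ.measure := by
    rw [← integral_const_mul]
    simp_rw [mul_one_div]
  have hdiff_le : ∫ t in Set.Icc 1 x, (x / t - g t) ∂σ.measure ≤ f x - f 1 := by
    have h1 : ∫ t in Set.Icc 1 x, (x / t - g t) ∂σ.measure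
        ≤ ∫ t in Set.Icc 1 x, (1:ℝ) ∂σ.measure := by
      apply setIntegral_mono_on (h_int_div.sub h_int_g) h_int_one measurableSet_Icc
      intro t ht
      have h := hg_eq t ht
      calc x / t - g t = x / t - (⌊x / t⌋₊ : ℝ) := by rw [h]
        _ ≤ 1 := by linarith [Nat.lt_floor_add_one (x / t)]
    rwa [setIntegral_const, smul_eq_mul, mul_one, measureReal_def, hmeasReal x hx1] at h1
  have hdiff_0 : 0 ≤ ∫ t in Set.Icc 1 x, (x / t - g t) ∂σ.measure := by
    apply setIntegral_nonneg measurableSet_Icc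
    intro t ht
    simp only [hg_eq t ht, sub_nonneg]
    exact Nat.floor_le (div_nonneg hx0.le (by linarith [ht.1]))
  have hsub : ∫ t in Set.Icc 1 x, (x / t - g t) ∂σ.measure
      = (∫ t in Set.Icc 1 x, x / t ∂σ.measure) - ∫ t in Set.Icc 1 x, g t ∂σ.measure :=
    integral_sub h_int_div h_int_g
  -- assemble
  have hFx := hX0 x hxX0
  rw [Real.norm_eq_abs, Real.norm_eq_abs, one_mul, abs_of_pos hx0] at hFx
  obtain ⟨hFxa, hFxb⟩ := abs_le.1 hFx
  have hfloor_le : (N:ℝ) ≤ x := Nat.floor_le hx0.le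
  have hN0 : (0:ℝ) ≤ (N:ℝ) := Nat.cast_nonneg N
  have hfx : f x ≤ C * x := hC x hx1
  have hBx1 : B * x ≤ |B| * x := mul_le_mul_of_nonneg_right (le_abs_self B) hx0.le
  have hBx2 : -(B * x) ≤ |B| * x := by
    have := mul_le_mul_of_nonneg_right (neg_le_abs B) hx0.le
    linarith
  have hNf1 : (N:ℝ) * f 1 ≤ x * f 1 := mul_le_mul_of_nonneg_right hfloor_le hf1
  have hNf0 : 0 ≤ (N:ℝ) * f 1 := mul_nonneg hN0 hf1
  have key : |x * (∫ t in Set.Icc 1 x, 1 / t ∂σ.measure) - A * x * Real.log x|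
      ≤ (1 + |B| + f 1 + C) * x := by
    rw [← hxdiv]
    rw [abs_le]
    have e1 : ∫ t in Set.Icc 1 x, x / t ∂σ.measure
        = ((∑ n ∈ Finset.Icc 1 N, f (x / n)) - N * f 1)
          + ∫ t in Set.Icc 1 x, (x / t - g t) ∂σ.measure := by
      rw [hsub, hgval]; ring
    rw [e1]
    constructor <;> nlinarith
  have hd : |(∫ t in Set.Icc 1 x, 1 / t ∂σ.measure) - A * Real.log x| ≤ 1 + |B| + f 1 + C := by
    rw [show x * (∫ t in Set.Icc 1 x, 1 / t ∂σ.measure) - A * x * Real.log x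
        = x * ((∫ t in Set.Icc 1 x, 1 / t ∂σ.measure) - A * Real.log x) from by ring,
      abs_mul, abs_of_pos hx0] at key
    nlinarith [abs_nonneg ((∫ t in Set.Icc 1 x, 1 / t ∂σ.measure) - A * Real.log x)]
  rw [Real.norm_eq_abs, Real.norm_eq_abs, abs_one, mul_one]
  exact hd
end

section
/- Let f : [1,∞) → ℝ be non-negative and non-decreasing, and let F(x) = Σ_{n ≤ x} f(x/n). If there exist real constants A, B such that F(x) = A·x·log x + B·x + o(x) as x → ∞, then ∫_1^x (f(t) − A·t)/t² dt = O(1) as x → ∞, i.e. the integrals are uniformly bounded for x ≥ 1. -/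
open Filter Real Finset MeasureTheory intervalIntegral

private lemma alt_sum_lower (a : ℕ → ℝ)
    (hm : ∀ m n : ℕ, 1 ≤ m → m ≤ n → a n ≤ a m)
    (hnn : ∀ n : ℕ, 1 ≤ n → 0 ≤ a n) :
    ∀ N : ℕ, 2 ≤ N →
      a 1 - a 2 ≤ ∑ n ∈ Finset.Icc 1 N, (-1 : ℝ) ^ (n + 1) * a n := by
  have key : ∀ N : ℕ, 2 ≤ N →
      (a 1 - a 2 ≤ ∑ n ∈ Finset.Icc 1 N, (-1 : ℝ) ^ (n + 1) * a n) ∧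
      (Odd N → a 1 - a 2 + a N ≤ ∑ n ∈ Finset.Icc 1 N, (-1 : ℝ) ^ (n + 1) * a n) := by
    intro N hN
    induction N, hN using Nat.le_induction with
    | base =>
      constructor
      · rw [show (2:ℕ) = 1 + 1 from rfl, Finset.sum_Icc_succ_top (by norm_num),
          Finset.Icc_self, Finset.sum_singleton]
        norm_num
      · intro h; exact absurd h (by decide)
    | succ N hN ih =>
      have hsum : ∑ n ∈ Finset.Icc 1 (N + 1), (-1 : ℝ) ^ (n + 1) * a n
          = (∑ n ∈ Finset.Icc 1 N, (-1 : ℝ) ^ (n + 1) * a n)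
            + (-1 : ℝ) ^ (N + 2) * a (N + 1) :=
        Finset.sum_Icc_succ_top (by omega) _
      rcases Nat.even_or_odd (N + 1) with he | ho
      · -- N+1 even, N odd
        have hNodd : Odd N := by
          rcases Nat.even_or_odd N with h | h
          · exact absurd (by simpa using h.add_one) (by simpa using he)
          · exact h
        have hpow : (-1 : ℝ) ^ (N + 2) = -1 := by
          have : Odd (N + 2) := by
            rcases hNodd with ⟨k, hk⟩; exact ⟨k + 1, by omega⟩
          exact this.neg_one_pow
        have h1 : a (N + 1) ≤ a N := hm N (N + 1) (by omega) (by omega)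
        constructor
        · rw [hsum, hpow]
          have := ih.2 hNodd
          linarith
        · intro h
          exact absurd h (Nat.not_odd_iff_even.mpr he)
      · -- N+1 odd
        have hpow : (-1 : ℝ) ^ (N + 2) = 1 := by
          have : Even (N + 2) := by
            rcases ho with ⟨k, hk⟩; exact ⟨k + 1, by omega⟩
          exact this.neg_one_pow
        have h0 : 0 ≤ a (N + 1) := hnn (N + 1) (by omega)
        constructor
        · rw [hsum, hpow]; have := ih.1; linarith
        · intro _; rw [hsum, hpow]; have := ih.1; linarith
  exact fun N hN => (key N hN).1

private lemma parity_split (f : ℝ → ℝ) (x : ℝ) :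
    ∑ n ∈ Finset.Icc 1 ⌊x⌋₊, (-1 : ℝ) ^ (n + 1) * f (x / n)
      = (∑ n ∈ Finset.Icc 1 ⌊x⌋₊, f (x / n))
        - 2 * ∑ m ∈ Finset.Icc 1 ⌊x / 2⌋₊, f (x / 2 / m) := by
  have h2 : ⌊x / 2⌋₊ = ⌊x⌋₊ / 2 := by
    rw [show (2:ℝ) = ((2:ℕ):ℝ) by norm_num, Nat.floor_div_natCast]
  set N := ⌊x⌋₊
  have hA : ∑ m ∈ Finset.Icc 1 ⌊x / 2⌋₊, f (x / 2 / m)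
      = ∑ n ∈ (Finset.Icc 1 N).filter (fun n => Even n), f (x / n) := by
    rw [h2]
    refine Finset.sum_nbij' (fun m => 2 * m) (fun n => n / 2) ?_ ?_ ?_ ?_ ?_
    · intro m hm
      simp only [Finset.mem_filter, Finset.mem_Icc] at *
      refine ⟨⟨by omega, by omega⟩, ⟨m, by omega⟩⟩
    · intro n hn
      simp only [Finset.mem_filter, Finset.mem_Icc] at *
      obtain ⟨⟨h1, h2⟩, k, hk⟩ := hn
      constructor <;> omega
    · intro m hm; omega
    · intro n hn
      simp only [Finset.mem_filter, Finset.mem_Icc] at hn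
      obtain ⟨_, k, hk⟩ := hn; omega
    · intro m hm
      congr 1
      rw [div_div]
      push_cast
      ring
  rw [hA]
  have hB : ∑ n ∈ (Finset.Icc 1 N).filter (fun n => Even n), f (x / n)
      = ∑ n ∈ Finset.Icc 1 N, (if Even n then f (x / n) else 0) :=
    Finset.sum_filter _ _
  rw [hB, Finset.mul_sum, ← Finset.sum_sub_distrib]
  refine Finset.sum_congr rfl fun n hn => ?_
  rcases Nat.even_or_odd n with he | ho
  · have : Odd (n + 1) := he.add_one
    rw [this.neg_one_pow, if_pos he]; ring
  · have : Even (n + 1) := ho.add_one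
    rw [this.neg_one_pow, if_neg (Nat.not_even_iff_odd.mpr ho)]; ring

private lemma linear_bound (f : ℝ → ℝ) (A B : ℝ)
    (hnonneg : ∀ x, 1 ≤ x → 0 ≤ f x)
    (hmono : ∀ x y, 1 ≤ x → x ≤ y → f x ≤ f y)
    (x₀ : ℝ) (hx₀ : 2 ≤ x₀)
    (hbound : ∀ x : ℝ, x₀ ≤ x →
      |(∑ n ∈ Finset.Icc 1 ⌊x⌋₊, f (x / n)) - (A * x * Real.log x + B * x)| ≤ x) :
    ∃ C₁ : ℝ, 0 ≤ C₁ ∧ ∀ x, 1 ≤ x → f x ≤ C₁ * x := by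
  have hlog2 : 0 ≤ Real.log 2 := Real.log_nonneg one_le_two
  set C : ℝ := 2 + |A| * Real.log 2 with hCdef
  have hC : 0 ≤ C := by positivity
  -- main step
  have step : ∀ x : ℝ, 2 * x₀ ≤ x → f x ≤ C * x + f (x / 2) := by
    intro x hx
    have hx4 : 4 ≤ x := by linarith
    have hx0 : 0 < x := by linarith
    have hx1 : 1 ≤ x := by linarith
    have hxhalf : 2 ≤ x / 2 := by linarith
    set a : ℕ → ℝ := fun n => f (max (x / n) 1) with hadef
    have ham : ∀ m n : ℕ, 1 ≤ m → m ≤ n → a n ≤ a m := by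
      intro m n h1 hmn
      have hm0 : (0:ℝ) < m := by exact_mod_cast h1
      have hdiv : x / n ≤ x / m := by
        apply div_le_div_of_nonneg_left hx0.le hm0
        exact_mod_cast hmn
      exact hmono _ _ (le_max_right _ _) (max_le_max hdiv le_rfl)
    have hann : ∀ n : ℕ, 1 ≤ n → 0 ≤ a n :=
      fun n _ => hnonneg _ (le_max_right _ _)
    have hN2 : 2 ≤ ⌊x⌋₊ := Nat.le_floor (by exact_mod_cast (by linarith : (2:ℝ) ≤ x))
    have halt := alt_sum_lower a ham hann ⌊x⌋₊ hN2
    have ha1 : a 1 = f x := by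
      simp only [hadef, Nat.cast_one, div_one, max_eq_left hx1]
    have ha2 : a 2 = f (x / 2) := by
      have : (1:ℝ) ≤ x / 2 := by linarith
      simp only [hadef, Nat.cast_ofNat, max_eq_left this]
    have hsum_eq : ∑ n ∈ Finset.Icc 1 ⌊x⌋₊, (-1 : ℝ) ^ (n + 1) * a n
        = ∑ n ∈ Finset.Icc 1 ⌊x⌋₊, (-1 : ℝ) ^ (n + 1) * f (x / n) := by
      refine Finset.sum_congr rfl fun n hn => ?_
      rw [Finset.mem_Icc] at hn
      have hn0 : (0:ℝ) < n := by exact_mod_cast hn.1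
      have hnx : (n:ℝ) ≤ x := le_trans (by exact_mod_cast hn.2 : (n:ℝ) ≤ ⌊x⌋₊)
        (Nat.floor_le hx0.le)
      have h1 : (1:ℝ) ≤ x / n := (one_le_div hn0).mpr hnx
      simp only [hadef, max_eq_left h1]
    rw [hsum_eq, parity_split] at halt
    have hb1 := hbound x (by linarith)
    have hb2 := hbound (x / 2) (by linarith)
    have hlog : Real.log (x / 2) = Real.log x - Real.log 2 :=
      Real.log_div (ne_of_gt hx0) two_ne_zero
    have key : (∑ n ∈ Finset.Icc 1 ⌊x⌋₊, f (x / n))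
        - 2 * ∑ m ∈ Finset.Icc 1 ⌊x / 2⌋₊, f (x / 2 / m) ≤ C * x := by
      have e1 : (∑ n ∈ Finset.Icc 1 ⌊x⌋₊, f (x / n))
          ≤ A * x * Real.log x + B * x + x := by
        have := abs_le.mp hb1; linarith
      have e2 : A * (x/2) * Real.log (x/2) + B * (x/2) - x/2
          ≤ ∑ m ∈ Finset.Icc 1 ⌊x / 2⌋₊, f (x / 2 / m) := by
        have := abs_le.mp hb2; linarith
      have e3 : A * x * Real.log x - 2 * (A * (x/2) * Real.log (x/2)) = A * Real.log 2 * x := by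
        rw [hlog]; ring
      have e4 : A * Real.log 2 * x ≤ |A| * Real.log 2 * x := by
        have h1 : A * Real.log 2 ≤ |A| * Real.log 2 :=
          mul_le_mul_of_nonneg_right (le_abs_self A) hlog2
        exact mul_le_mul_of_nonneg_right h1 hx0.le
      nlinarith [e1, e2]
    rw [ha1, ha2] at halt
    linarith
  -- dyadic induction
  set K : ℝ := 2 * C + f (2 * x₀) with hKdef
  have hf2x₀ : 0 ≤ f (2 * x₀) := hnonneg _ (by linarith)
  have hK : 0 ≤ K := by positivity
  have small : ∀ x : ℝ, 1 ≤ x → x ≤ 2 * x₀ → f x ≤ K * x := by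
    intro x h1 h2
    have : f x ≤ f (2 * x₀) := hmono _ _ h1 h2
    have : f x ≤ K := by simp only [hKdef]; linarith
    calc f x ≤ K := this
      _ ≤ K * x := le_mul_of_one_le_right hK h1
  have claim : ∀ n : ℕ, ∀ x : ℝ, 1 ≤ x → x ≤ 2 * x₀ * 2 ^ n → f x ≤ K * x := by
    intro n
    induction n with
    | zero => intro x h1 h2; exact small x h1 (by simpa using h2)
    | succ n ih =>
      intro x h1 h2
      rcases le_or_gt x (2 * x₀) with h | h
      · exact small x h1 h
      · have hs := step x h.le
        have hx2a : (1:ℝ) ≤ x / 2 := by linarith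
        have hx2b : x / 2 ≤ 2 * x₀ * 2 ^ n := by
          rw [pow_succ] at h2; linarith
        have := ih (x / 2) hx2a hx2b
        have hxpos : (0:ℝ) ≤ x := by linarith
        have h2C : 2 * C ≤ K := by simp only [hKdef]; linarith
        nlinarith
  refine ⟨K, hK, fun x h1 => ?_⟩
  obtain ⟨n, hn⟩ := pow_unbounded_of_one_lt x (one_lt_two : (1:ℝ) < 2)
  refine claim n x h1 (le_trans hn.le ?_)
  have h2n : (0:ℝ) ≤ 2 ^ n := by positivity
  nlinarith

private lemma cont_aux {a b : ℝ} (ha : 0 < a) (hab : a ≤ b) (g : ℝ → ℝ)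
    (hg : Continuous g) :
    ContinuousOn (fun t => g t / t ^ 2) (Set.uIcc a b) := by
  apply ContinuousOn.div hg.continuousOn (by fun_prop)
  intro t ht
  rw [Set.uIcc_of_le hab] at ht
  have : 0 < t := lt_of_lt_of_le ha ht.1
  positivity

private lemma f_intintegrable (f : ℝ → ℝ)
    (hmono : ∀ x y, 1 ≤ x → x ≤ y → f x ≤ f y)
    {a b : ℝ} (ha : 1 ≤ a) (hab : a ≤ b) (A : ℝ) :
    IntervalIntegrable (fun t => (f t - A * t) / t ^ 2) volume a b := by
  have h0 : 0 < a := lt_of_lt_of_le one_pos ha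
  have hfmono : MonotoneOn f (Set.uIcc a b) := by
    rw [Set.uIcc_of_le hab]
    intro u hu v hv huv
    exact hmono u v (le_trans ha hu.1) huv
  have h1 : IntervalIntegrable (fun t => f t * (t ^ 2)⁻¹) volume a b := by
    apply hfmono.intervalIntegrable.mul_continuousOn
    apply ContinuousOn.inv₀ (by fun_prop)
    intro t ht
    rw [Set.uIcc_of_le hab] at ht
    have : 0 < t := lt_of_lt_of_le h0 ht.1
    positivity
  have h2 : IntervalIntegrable (fun t => (A * t) / t ^ 2) volume a b :=
    (cont_aux h0 hab _ (by fun_prop)).intervalIntegrable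
  have := h1.sub h2
  apply this.congr
  intro t _
  simp only [sub_div, div_eq_mul_inv]
  ring

private lemma integral_linear_div_sq (c A : ℝ) {a b : ℝ} (ha : 0 < a) (hab : a ≤ b) :
    ∫ t in a..b, (c - A * t) / t ^ 2
      = c * (1 / a - 1 / b) - A * (Real.log b - Real.log a) := by
  have hb : 0 < b := lt_of_lt_of_le ha hab
  have h0 : (0:ℝ) ∉ Set.uIcc a b := by
    rw [Set.uIcc_of_le hab]
    rintro ⟨h1, -⟩
    exact absurd h1 (not_le.mpr ha)
  have hcong : ∀ t ∈ Set.uIcc a b,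
      (c - A * t) / t ^ 2 = c * t ^ (-2 : ℤ) - A * (1 / t) := by
    intro t ht
    rw [Set.uIcc_of_le hab] at ht
    have ht0 : t ≠ 0 := ne_of_gt (lt_of_lt_of_le ha ht.1)
    rw [zpow_neg, zpow_two]
    field_simp
  rw [intervalIntegral.integral_congr hcong]
  have hi1 : IntervalIntegrable (fun t : ℝ => c * t ^ (-2 : ℤ)) volume a b := by
    apply ContinuousOn.intervalIntegrable
    apply ContinuousOn.mul continuousOn_const
    apply ContinuousOn.zpow₀ continuousOn_id
    intro t ht
    exact Or.inl (ne_of_mem_of_not_mem ht h0)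
  have hi2 : IntervalIntegrable (fun t : ℝ => A * (1 / t)) volume a b := by
    apply ContinuousOn.intervalIntegrable
    apply ContinuousOn.mul continuousOn_const
    apply ContinuousOn.div continuousOn_const continuousOn_id
    intro t ht
    exact ne_of_mem_of_not_mem ht h0
  rw [intervalIntegral.integral_sub hi1 hi2, intervalIntegral.integral_const_mul,
    intervalIntegral.integral_const_mul, integral_zpow (Or.inr ⟨by norm_num, h0⟩),
    integral_one_div h0, Real.log_div (ne_of_gt hb) (ne_of_gt ha)]
  have hane : a ≠ 0 := ne_of_gt ha
  have hbne : b ≠ 0 := ne_of_gt hb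
  norm_num
  exact Or.inl (by ring)

private lemma piece_estimate (f : ℝ → ℝ) (A : ℝ)
    (hmono : ∀ x y, 1 ≤ x → x ≤ y → f x ≤ f y)
    {a b : ℝ} (ha : 1 ≤ a) (hab : a ≤ b) :
    |(∫ t in a..b, (f t - A * t) / t ^ 2)
       - (f b * (1 / a - 1 / b) - A * (Real.log b - Real.log a))|
      ≤ (f b - f a) * ((b - a) / a ^ 2) := by
  have h0 : 0 < a := lt_of_lt_of_le one_pos ha
  have hint1 := f_intintegrable f hmono ha hab A
  have hint2 : IntervalIntegrable (fun t => (f b - A * t) / t ^ 2) volume a b :=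
    (cont_aux h0 hab _ (by fun_prop)).intervalIntegrable
  rw [← integral_linear_div_sq (f b) A h0 hab, ← intervalIntegral.integral_sub hint1 hint2]
  have hcong : ∀ t ∈ Set.uIcc a b,
      (f t - A * t) / t ^ 2 - (f b - A * t) / t ^ 2 = (f t - f b) / t ^ 2 := by
    intro t _
    rw [div_sub_div_same]
    congr 1
    ring
  rw [intervalIntegral.integral_congr hcong]
  have key : ∀ t ∈ Set.uIoc a b, ‖(f t - f b) / t ^ 2‖ ≤ (f b - f a) / a ^ 2 := by
    intro t ht
    rw [Set.uIoc_of_le hab] at ht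
    have hta : a < t := ht.1
    have htb : t ≤ b := ht.2
    have h1t : 1 ≤ t := le_trans ha hta.le
    have hfat : f a ≤ f t := hmono a t ha hta.le
    have hftb : f t ≤ f b := hmono t b h1t htb
    have ht0 : 0 < t := lt_of_lt_of_le one_pos h1t
    rw [Real.norm_eq_abs, abs_div, abs_of_nonneg (by positivity : (0:ℝ) ≤ t ^ 2),
      abs_sub_comm, abs_of_nonneg (by linarith : (0:ℝ) ≤ f b - f t)]
    apply div_le_div₀ (by linarith) (by linarith) (by positivity)
    nlinarith
  have := intervalIntegral.norm_integral_le_of_norm_le_const key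
  rw [Real.norm_eq_abs] at this
  calc |∫ t in a..b, (f t - f b) / t ^ 2| ≤ (f b - f a) / a ^ 2 * |b - a| := this
    _ = (f b - f a) * ((b - a) / a ^ 2) := by
        rw [abs_of_nonneg (by linarith : (0:ℝ) ≤ b - a)]; ring

private lemma middle_decomp (f : ℝ → ℝ) (A : ℝ)
    (hnonneg : ∀ x, 1 ≤ x → 0 ≤ f x)
    (hmono : ∀ x y, 1 ≤ x → x ≤ y → f x ≤ f y)
    (x : ℝ) (hx : 2 ≤ x) :
    |(∫ t in (x / (⌊x⌋₊ : ℝ))..x, (f t - A * t) / t ^ 2)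
       - ((∑ n ∈ Finset.Icc 1 ⌊x⌋₊, f (x / n)) / x - f (x / (⌊x⌋₊ : ℝ)) / x
           - A * Real.log (⌊x⌋₊ : ℝ))|
      ≤ 2 * f x / x := by
  have hx0 : (0:ℝ) < x := by linarith
  set N := ⌊x⌋₊ with hNdef
  have hN2 : 2 ≤ N := Nat.le_floor (by exact_mod_cast hx)
  have hNx : (N : ℝ) ≤ x := Nat.floor_le hx0.le
  have hN0 : (0:ℝ) < N := by positivity
  set u : ℕ → ℝ := fun i => x / ((N - i : ℕ) : ℝ) with hudef
  have hu1 : ∀ i : ℕ, i ≤ N - 1 → 1 ≤ u i := by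
    intro i hi
    have h1 : 1 ≤ N - i := by omega
    have h2 : ((N - i : ℕ) : ℝ) ≤ (N : ℝ) := by exact_mod_cast Nat.sub_le N i
    have h3 : (0:ℝ) < ((N - i : ℕ) : ℝ) := by exact_mod_cast h1
    rw [hudef]
    exact (one_le_div h3).mpr (le_trans h2 hNx)
  have humono : ∀ i j : ℕ, i ≤ j → j ≤ N - 1 → u i ≤ u j := by
    intro i j hij hj
    have h1 : 1 ≤ N - j := by omega
    have h3 : (0:ℝ) < ((N - j : ℕ) : ℝ) := by exact_mod_cast h1
    have h4 : ((N - j : ℕ) : ℝ) ≤ ((N - i : ℕ) : ℝ) := by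
      exact_mod_cast Nat.sub_le_sub_left hij N
    exact div_le_div_of_nonneg_left hx0.le h3 h4
  have hu0 : u 0 = x / (N : ℝ) := by simp [hudef]
  have huN : u (N - 1) = x := by
    have h : N - (N - 1) = 1 := by omega
    simp [hudef, h]
  have hInt : ∀ i, i < N - 1 →
      IntervalIntegrable (fun t => (f t - A * t) / t ^ 2) volume (u i) (u (i + 1)) :=
    fun i hi => f_intintegrable f hmono (hu1 i (by omega)) (humono i (i+1) (by omega) (by omega)) A
  have hsum := intervalIntegral.sum_integral_adjacent_intervals (μ := volume)
      (a := u) (n := N - 1) hInt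
  rw [hu0, huN] at hsum
  -- per-piece bound
  set main : ℕ → ℝ := fun i => f (u (i+1)) * (1 / u i - 1 / u (i+1))
      - A * (Real.log (u (i+1)) - Real.log (u i)) with hmaindef
  have hpiece : ∀ i ∈ Finset.range (N - 1),
      |(∫ t in (u i)..(u (i+1)), (f t - A * t) / t ^ 2) - main i|
        ≤ (f (u (i+1)) - f (u i)) * (2 / x) := by
    intro i hi
    rw [Finset.mem_range] at hi
    have h1 : 1 ≤ u i := hu1 i (by omega)
    have hle : u i ≤ u (i + 1) := humono i (i+1) (by omega) (by omega)
    refine le_trans (piece_estimate f A hmono h1 hle) ?_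
    have hf : 0 ≤ f (u (i+1)) - f (u i) := by
      have := hmono _ _ h1 hle; linarith
    apply mul_le_mul_of_nonneg_left _ hf
    -- ratio bound
    have hk2 : 2 ≤ N - i := by omega
    set k : ℝ := ((N - i : ℕ) : ℝ) with hkdef
    have hkR : (2:ℝ) ≤ k := by rw [hkdef]; exact_mod_cast hk2
    have hk' : ((N - (i+1) : ℕ) : ℝ) = k - 1 := by
      rw [hkdef]
      have : N - (i+1) = (N - i) - 1 := by omega
      rw [this, Nat.cast_sub (by omega)]
      norm_num
    have hk0 : (0:ℝ) < k := by linarith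
    have hk10 : (0:ℝ) < k - 1 := by linarith
    have huieq : u i = x / k := rfl
    have hui1eq : u (i+1) = x / (k - 1) := by rw [hudef]; simp only [hk']
    rw [huieq, hui1eq]
    have heq : (x / (k-1) - x / k) / (x / k) ^ 2 = k / (x * (k-1)) := by
      field_simp
      ring
    rw [heq, div_le_div_iff₀ (by positivity) hx0]
    nlinarith
  -- telescoping of errors
  have Etele : ∑ i ∈ Finset.range (N - 1), (f (u (i+1)) - f (u i)) * (2 / x)
      = (f x - f (x / (N:ℝ))) * (2 / x) := by
    rw [← Finset.sum_mul, Finset.sum_range_sub (fun i => f (u i)), huN, hu0]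
  have Ebound : |(∑ i ∈ Finset.range (N-1), ∫ t in (u i)..(u (i+1)), (f t - A * t) / t ^ 2)
      - ∑ i ∈ Finset.range (N-1), main i| ≤ (f x - f (x / (N:ℝ))) * (2 / x) := by
    rw [← Finset.sum_sub_distrib, ← Etele]
    exact le_trans (Finset.abs_sum_le_sum_abs _ _) (Finset.sum_le_sum hpiece)
  -- computing the main sum
  have hmain_sum : ∑ i ∈ Finset.range (N-1), main i
      = (∑ n ∈ Finset.Icc 1 N, f (x / n)) / x - f (x / (N : ℝ)) / x
        - A * Real.log (N : ℝ) := by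
    have h1 : ∀ i ∈ Finset.range (N-1), main i
        = f (u (i+1)) * (1/x) - A * (Real.log (u (i+1)) - Real.log (u i)) := by
      intro i hi
      rw [Finset.mem_range] at hi
      have hk2 : 2 ≤ N - i := by omega
      set k : ℝ := ((N - i : ℕ) : ℝ) with hkdef
      have hkR : (2:ℝ) ≤ k := by rw [hkdef]; exact_mod_cast hk2
      have hk' : ((N - (i+1) : ℕ) : ℝ) = k - 1 := by
        rw [hkdef]
        have : N - (i+1) = (N - i) - 1 := by omega
        rw [this, Nat.cast_sub (by omega)]
        norm_num
      have huieq : u i = x / k := rfl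
      have hui1eq : u (i+1) = x / (k - 1) := by rw [hudef]; simp only [hk']
      rw [hmaindef]
      simp only [huieq, hui1eq]
      congr 1
      congr 1
      rw [one_div_div, one_div_div]
      ring
    rw [Finset.sum_congr rfl h1, Finset.sum_sub_distrib, ← Finset.sum_mul,
      ← Finset.mul_sum, Finset.sum_range_sub (fun i => Real.log (u i)), huN, hu0]
    have hlogN : Real.log x - Real.log (x / (N:ℝ)) = Real.log (N:ℝ) := by
      rw [Real.log_div (ne_of_gt hx0) (ne_of_gt hN0)]
      ring
    rw [hlogN]
    have h2 : ∑ i ∈ Finset.range (N-1), f (u (i+1))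
        = ∑ n ∈ Finset.Icc 1 (N-1), f (x / n) := by
      have h3 : ∑ i ∈ Finset.range (N-1), f (u (i+1))
          = ∑ j ∈ Finset.range (N-1), f (x / ((j + 1 : ℕ) : ℝ)) := by
        rw [← Finset.sum_range_reflect (fun j => f (x / ((j + 1 : ℕ) : ℝ))) (N-1)]
        refine Finset.sum_congr rfl fun j hj => ?_
        rw [Finset.mem_range] at hj
        have hnat : N - (j + 1) = N - 1 - 1 - j + 1 := by omega
        simp only [hudef, hnat]
      rw [h3]
      rw [← Finset.Ico_add_one_right_eq_Icc, Finset.sum_Ico_eq_sum_range]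
      have : N - 1 + 1 - 1 = N - 1 := by omega
      rw [this]
      refine Finset.sum_congr rfl fun j hj => ?_
      rw [Nat.add_comm 1 j]
    rw [h2]
    have h4 : ∑ n ∈ Finset.Icc 1 N, f (x / n)
        = (∑ n ∈ Finset.Icc 1 (N-1), f (x / n)) + f (x / (N:ℝ)) := by
      have hNeq : N = (N - 1) + 1 := by omega
      conv_lhs => rw [hNeq]
      rw [Finset.sum_Icc_succ_top (by omega), show (N - 1) + 1 = N by omega]
    rw [h4]
    ring
  -- conclude
  rw [← hsum, ← hmain_sum]
  have hfN : 0 ≤ f (x / (N:ℝ)) := by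
    apply hnonneg
    rw [one_le_div hN0]
    exact hNx
  have hfx : 0 ≤ f x := hnonneg x (by linarith)
  refine le_trans Ebound ?_
  calc (f x - f (x / (N:ℝ))) * (2 / x)
    _ ≤ f x * (2 / x) := mul_le_mul_of_nonneg_right (by linarith) (by positivity)
    _ = 2 * f x / x := by ring

set_option maxHeartbeats 2000000 in
theorem moebius_transform_estimate_integral_bounded
    (f : ℝ → ℝ) (A B : ℝ)
    (hnonneg : ∀ x, 1 ≤ x → 0 ≤ f x)
    (hmono : ∀ x y, 1 ≤ x → x ≤ y → f x ≤ f y)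
    (hF : (fun x : ℝ =>
        (∑ n ∈ Finset.Icc 1 ⌊x⌋₊, f (x / n)) - (A * x * Real.log x + B * x))
      =o[atTop] fun x : ℝ => x) :
    ∃ C : ℝ, ∀ x : ℝ, 1 ≤ x →
      |∫ t in (1:ℝ)..x, (f t - A * t) / t ^ 2| ≤ C := by
  have h1 := hF.def one_pos
  rw [eventually_atTop] at h1
  obtain ⟨x₀', hx₀'⟩ := h1
  set x₀ : ℝ := max x₀' 2 with hx₀def
  have hx₀2 : (2:ℝ) ≤ x₀ := le_max_right _ _
  have hbound : ∀ x : ℝ, x₀ ≤ x →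
      |(∑ n ∈ Finset.Icc 1 ⌊x⌋₊, f (x / n)) - (A * x * Real.log x + B * x)| ≤ x := by
    intro x hx
    have h := hx₀' x (le_trans (le_max_left _ _) hx)
    have hx2 : (2:ℝ) ≤ x := le_trans hx₀2 hx
    rw [Real.norm_eq_abs, Real.norm_eq_abs, one_mul, abs_of_nonneg (by linarith : (0:ℝ) ≤ x)] at h
    exact h
  obtain ⟨C₁, hC₁0, hC₁⟩ := linear_bound f A B hnonneg hmono x₀ hx₀2 hbound
  have hlog2 : 0 ≤ Real.log 2 := Real.log_nonneg one_le_two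
  set Cbig : ℝ := 1 + |B| + |A| * Real.log 2 + 8 * C₁ + 2 * |A| with hCbigdef
  set Csmall : ℝ := (C₁ + |A|) * x₀ * x₀ with hCsmalldef
  refine ⟨max Cbig Csmall, fun x hx1 => ?_⟩
  rcases le_or_gt x x₀ with hsx | hbx
  · -- small x
    refine le_trans ?_ (le_max_right _ _)
    have key : ∀ t ∈ Set.uIoc 1 x, ‖(f t - A * t) / t ^ 2‖ ≤ (C₁ + |A|) * x₀ := by
      intro t ht
      rw [Set.uIoc_of_le hx1] at ht
      have h1t : (1:ℝ) ≤ t := ht.1.le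
      have htx : t ≤ x₀ := le_trans ht.2 hsx
      have h1t2 : (1:ℝ) ≤ t ^ 2 := by nlinarith
      rw [Real.norm_eq_abs, abs_div, abs_of_nonneg (by positivity : (0:ℝ) ≤ t ^ 2)]
      calc |f t - A * t| / t ^ 2 ≤ |f t - A * t| := div_le_self (abs_nonneg _) h1t2
        _ ≤ |f t| + |A * t| := abs_sub _ _
        _ ≤ C₁ * t + |A| * t := by
            rw [abs_mul, abs_of_nonneg (by linarith : (0:ℝ) ≤ t)]
            have := hnonneg t h1t
            have := hC₁ t h1t
            rw [abs_of_nonneg ‹0 ≤ f t›]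
            linarith
        _ = (C₁ + |A|) * t := by ring
        _ ≤ (C₁ + |A|) * x₀ := by
            apply mul_le_mul_of_nonneg_left htx (by positivity)
    have h := intervalIntegral.norm_integral_le_of_norm_le_const key
    rw [Real.norm_eq_abs] at h
    refine le_trans h ?_
    rw [hCsmalldef, abs_of_nonneg (by linarith : (0:ℝ) ≤ x - 1)]
    have hx1' : x - 1 ≤ x₀ := by linarith
    exact mul_le_mul_of_nonneg_left hx1' (by positivity)
  · -- large x
    refine le_trans ?_ (le_max_left _ _)
    have hx2 : (2:ℝ) ≤ x := le_trans hx₀2 hbx.le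
    have hx0 : (0:ℝ) < x := by linarith
    set N := ⌊x⌋₊ with hNdef
    have hN2 : 2 ≤ N := Nat.le_floor (by exact_mod_cast hx2)
    have hNx : (N : ℝ) ≤ x := Nat.floor_le hx0.le
    have hN0 : (0:ℝ) < N := by positivity
    have hN1 : (1:ℝ) ≤ N := by exact_mod_cast hN2.trans' (by norm_num)
    have hxN1 : (1:ℝ) ≤ x / N := (one_le_div hN0).mpr hNx
    have hxlt : x < N + 1 := Nat.lt_floor_add_one x
    have hxN2 : x / N ≤ 2 := by
      rw [div_le_iff₀ hN0]
      linarith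
    have hxNx : x / N ≤ x := by
      rw [div_le_iff₀ hN0]
      nlinarith
    have i1 : IntervalIntegrable (fun t => (f t - A * t) / t ^ 2) volume 1 (x / N) :=
      f_intintegrable f hmono le_rfl hxN1 A
    have i2 : IntervalIntegrable (fun t => (f t - A * t) / t ^ 2) volume (x / N) x :=
      f_intintegrable f hmono hxN1 hxNx A
    have hsplit := intervalIntegral.integral_add_adjacent_intervals i1 i2
    -- tail bound
    have htail : |∫ t in (1:ℝ)..(x / N), (f t - A * t) / t ^ 2| ≤ 2 * C₁ + 2 * |A| := by
      have key : ∀ t ∈ Set.uIoc 1 (x / N), ‖(f t - A * t) / t ^ 2‖ ≤ 2 * C₁ + 2 * |A| := by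
        intro t ht
        rw [Set.uIoc_of_le hxN1] at ht
        have h1t : (1:ℝ) ≤ t := ht.1.le
        have ht2 : t ≤ 2 := le_trans ht.2 hxN2
        have h1t2 : (1:ℝ) ≤ t ^ 2 := by nlinarith
        rw [Real.norm_eq_abs, abs_div, abs_of_nonneg (by positivity : (0:ℝ) ≤ t ^ 2)]
        calc |f t - A * t| / t ^ 2 ≤ |f t - A * t| := div_le_self (abs_nonneg _) h1t2
          _ ≤ |f t| + |A * t| := abs_sub _ _
          _ ≤ 2 * C₁ + 2 * |A| := by
              rw [abs_mul, abs_of_nonneg (by linarith : (0:ℝ) ≤ t),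
                abs_of_nonneg (hnonneg t h1t)]
              have h3 := hC₁ t h1t
              have h4 : |A| * t ≤ |A| * 2 := mul_le_mul_of_nonneg_left ht2 (abs_nonneg A)
              nlinarith
      have h := intervalIntegral.norm_integral_le_of_norm_le_const key
      rw [Real.norm_eq_abs] at h
      refine le_trans h ?_
      rw [abs_of_nonneg (by linarith : (0:ℝ) ≤ x / N - 1)]
      nlinarith [abs_nonneg A]
    -- middle
    set S : ℝ := ∑ n ∈ Finset.Icc 1 N, f (x / n) with hSdef
    set D : ℝ := S / x - f (x / (N : ℝ)) / x - A * Real.log (N : ℝ) with hDdef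
    have hmid := middle_decomp f A hnonneg hmono x hx2
    have hmid2 : 2 * f x / x ≤ 2 * C₁ := by
      rw [div_le_iff₀ hx0]
      have := hC₁ x (by linarith)
      nlinarith
    -- bound on D
    have hS1 : |S / x - (A * Real.log x + B)| ≤ 1 := by
      have h := hbound x hbx.le
      rw [← hSdef] at h
      have heq : S / x - (A * Real.log x + B) = (S - (A * x * Real.log x + B * x)) / x := by
        field_simp
      rw [heq, abs_div, abs_of_nonneg hx0.le, div_le_one hx0]
      exact h
    have hlogdiff : Real.log x - Real.log N = Real.log (x / N) := by
      rw [Real.log_div (ne_of_gt hx0) (ne_of_gt hN0)]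
    have hlog_lb : 0 ≤ Real.log (x / N) := Real.log_nonneg hxN1
    have hlog_ub : Real.log (x / N) ≤ Real.log 2 := Real.log_le_log (by linarith) hxN2
    have hfN_ub : f (x / (N:ℝ)) / x ≤ 2 * C₁ := by
      have h1 := hC₁ (x / N) hxN1
      have h3 : 0 ≤ f (x / (N:ℝ)) := hnonneg _ hxN1
      have h2 : f (x / (N:ℝ)) ≤ 2 * C₁ := by
        refine le_trans h1 ?_
        calc C₁ * (x / N) ≤ C₁ * 2 := mul_le_mul_of_nonneg_left hxN2 hC₁0
          _ = 2 * C₁ := by ring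
      calc f (x / (N:ℝ)) / x ≤ f (x / (N:ℝ)) := div_le_self h3 (by linarith)
        _ ≤ 2 * C₁ := h2
    have hfN_lb : 0 ≤ f (x / (N:ℝ)) / x := by
      have := hnonneg (x / (N:ℝ)) hxN1
      positivity
    have hD : |D| ≤ 1 + |B| + |A| * Real.log 2 + 2 * C₁ := by
      have heq : D = (S / x - (A * Real.log x + B)) + B
          + A * (Real.log x - Real.log (N:ℝ)) + (-(f (x / (N:ℝ)) / x)) := by
        rw [hDdef]; ring
      have abs4 : ∀ p q r s : ℝ, |p + q + r + s| ≤ |p| + |q| + |r| + |s| := by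
        intro p q r s
        calc |p + q + r + s| ≤ |p + q + r| + |s| := abs_add_le _ _
          _ ≤ (|p + q| + |r|) + |s| := by linarith [abs_add_le (p + q) r]
          _ ≤ |p| + |q| + |r| + |s| := by linarith [abs_add_le p q]
      rw [heq]
      refine le_trans (abs4 _ _ _ _) ?_
      have t2 : |A * (Real.log x - Real.log (N:ℝ))| ≤ |A| * Real.log 2 := by
        rw [abs_mul, hlogdiff, abs_of_nonneg hlog_lb]
        exact mul_le_mul_of_nonneg_left hlog_ub (abs_nonneg A)
      have t3 : |(-(f (x / (N:ℝ)) / x))| ≤ 2 * C₁ := by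
        rw [abs_neg, abs_of_nonneg hfN_lb]
        exact hfN_ub
      linarith
    -- final combination
    rw [← hsplit]
    calc |(∫ t in (1:ℝ)..(x / N), (f t - A * t) / t ^ 2)
          + ∫ t in (x / (N:ℝ))..x, (f t - A * t) / t ^ 2|
        ≤ |∫ t in (1:ℝ)..(x / N), (f t - A * t) / t ^ 2|
          + |∫ t in (x / (N:ℝ))..x, (f t - A * t) / t ^ 2| := abs_add_le _ _
      _ ≤ (2 * C₁ + 2 * |A|) + (|((∫ t in (x / (N:ℝ))..x, (f t - A * t) / t ^ 2) - D)| + |D|) := by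
          have habs : |∫ t in (x / (N:ℝ))..x, (f t - A * t) / t ^ 2|
              ≤ |((∫ t in (x / (N:ℝ))..x, (f t - A * t) / t ^ 2) - D)| + |D| := by
            have := abs_add_le ((∫ t in (x / (N:ℝ))..x, (f t - A * t) / t ^ 2) - D) D
            simpa using this
          linarith
      _ ≤ (2 * C₁ + 2 * |A|) + ((2 * C₁) + (1 + |B| + |A| * Real.log 2 + 2 * C₁)) := by
          have := le_trans hmid hmid2
          linarith
      _ ≤ Cbig := by rw [hCbigdef]; linarith
end

section
/- Let g : [1,∞) → ℝ and suppose there exist constants M, M' ≥ 0 such that (1) the function x ↦ g(x) + M·x is non-decreasing on [1,∞), and (2) |∫_1^x g(t)/t² dt| ≤ M' for all x ≥ 1. Then S := limsup_{x→∞} |g(x)|/x is finite, and moreover if S > 0 then limsup_{x→∞} (1/log x)·∫_1^x |g(t)|/t² dt < S. -/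
open Filter Real MeasureTheory Set intervalIntegral

section ErdosAux
variable {g : ℝ → ℝ} {M M' : ℝ}




lemma erdos_gmeas (hmono : Monotone fun t => g t + M * t) : Measurable g := by
  have h1 : Measurable fun t => g t + M * t := hmono.measurable
  have : g = fun t => (g t + M * t) - M * t := by funext t; ring
  rw [this]
  exact h1.sub (measurable_const.mul measurable_id)

lemma erdos_gii (hmono : Monotone fun t => g t + M * t) {a b : ℝ} (ha : 1 ≤ a) (hab : a ≤ b) :
    IntervalIntegrable (fun t => g t / t ^ 2) volume a b := by
  have hh : IntervalIntegrable (fun t => g t + M * t) volume a b :=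
    (hmono.monotoneOn _).intervalIntegrable
  have hmt : IntervalIntegrable (fun t => M * t) volume a b :=
    (continuous_const.mul continuous_id).intervalIntegrable a b
  have hg : IntervalIntegrable g volume a b := by
    have : g = fun t => (g t + M * t) - M * t := by funext t; ring
    rw [this]; exact hh.sub hmt
  have hcont : ContinuousOn (fun t : ℝ => (t ^ 2)⁻¹) (uIcc a b) := by
    apply ContinuousOn.inv₀ (continuousOn_pow 2)
    intro t ht
    rw [uIcc_of_le hab] at ht
    have : (1:ℝ) ≤ t := le_trans ha ht.1
    positivity
  have := hg.mul_continuousOn hcont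
  simpa [div_eq_mul_inv] using this

lemma erdos_absii (hmono : Monotone fun t => g t + M * t) {a b : ℝ} (ha : 1 ≤ a) (hab : a ≤ b) :
    IntervalIntegrable (fun t => |g t| / t ^ 2) volume a b := by
  have := (erdos_gii hmono ha hab).abs
  have he : (fun t => |g t / t ^ 2|) = fun t => |g t| / t ^ 2 := by
    funext t; rw [abs_div, abs_of_nonneg (sq_nonneg t)]
  rwa [he] at this

lemma erdos_key2 (hmono : Monotone fun t => g t + M * t)
    (h2 : ∀ x : ℝ, 1 ≤ x → |∫ t in (1:ℝ)..x, g t / t ^ 2| ≤ M')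
    {u v : ℝ} (hu : 1 ≤ u) (huv : u ≤ v) :
    |∫ t in u..v, g t / t ^ 2| ≤ 2 * M' := by
  have h1u := erdos_gii hmono le_rfl hu
  have huv' := erdos_gii hmono hu huv
  have hadd := integral_add_adjacent_intervals (μ := volume)
    (f := fun t => g t / t ^ 2) h1u huv'
  have e1 := h2 u hu
  have e2 := h2 v (le_trans hu huv)
  have : ∫ t in u..v, g t / t ^ 2
      = (∫ t in (1:ℝ)..v, g t / t ^ 2) - ∫ t in (1:ℝ)..u, g t / t ^ 2 := by
    linarith [hadd]
  rw [this]
  calc |(∫ t in (1:ℝ)..v, g t / t ^ 2) - ∫ t in (1:ℝ)..u, g t / t ^ 2|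
      ≤ |∫ t in (1:ℝ)..v, g t / t ^ 2| + |∫ t in (1:ℝ)..u, g t / t ^ 2| := abs_sub _ _
    _ ≤ 2 * M' := by linarith

lemma erdos_intlin {c M x y : ℝ} (hx : 0 < x) (hxy : x ≤ y) :
    ∫ t in x..y, (c - M * t) / t ^ 2
      = c * (x⁻¹ - y⁻¹) - M * (Real.log y - Real.log x) := by
  have hne : ∀ t ∈ uIcc x y, t ≠ 0 := by
    intro t ht
    rw [uIcc_of_le hxy] at ht
    exact ne_of_gt (lt_of_lt_of_le hx ht.1)
  have hderiv : ∀ t ∈ uIcc x y,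
      HasDerivAt (fun t : ℝ => -c * t⁻¹ - M * Real.log t) ((c - M * t) / t ^ 2) t := by
    intro t ht
    have htne := hne t ht
    have h1 : HasDerivAt (fun t : ℝ => -c * t⁻¹) (-c * (-(t ^ 2)⁻¹)) t :=
      (hasDerivAt_inv htne).const_mul (-c)
    have h2 : HasDerivAt (fun t : ℝ => M * Real.log t) (M * t⁻¹) t :=
      (Real.hasDerivAt_log htne).const_mul M
    have := h1.sub h2
    refine this.congr_deriv ?_
    field_simp
  have hint : IntervalIntegrable (fun t => (c - M * t) / t ^ 2) volume x y := by
    apply ContinuousOn.intervalIntegrable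
    apply ContinuousOn.div
    · exact (continuous_const.sub (continuous_const.mul continuous_id)).continuousOn
    · exact continuousOn_pow 2
    · intro t ht; have := hne t ht; positivity
  rw [integral_eq_sub_of_hasDerivAt hderiv hint]
  ring





noncomputable def erdosPhi (g : ℝ → ℝ) : ℝ → ℝ := fun s => g (Real.exp s) / Real.exp s



lemma erdos_exp_image {a b : ℝ} (hab : a ≤ b) :
    Real.exp '' Icc a b = Icc (Real.exp a) (Real.exp b) := by
  ext t
  constructor
  · rintro ⟨s, hs, rfl⟩
    exact ⟨Real.exp_le_exp.2 hs.1, Real.exp_le_exp.2 hs.2⟩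
  · intro ht
    have ht0 : 0 < t := lt_of_lt_of_le (Real.exp_pos a) ht.1
    refine ⟨Real.log t, ⟨?_, ?_⟩, Real.exp_log ht0⟩
    · exact (Real.le_log_iff_exp_le ht0).2 ht.1
    · exact (Real.log_le_iff_le_exp ht0).2 ht.2

lemma erdos_subst (f : ℝ → ℝ) {a b : ℝ} (hab : a ≤ b) :
    ∫ t in Icc (Real.exp a) (Real.exp b), f t
      = ∫ s in Icc a b, Real.exp s * f (Real.exp s) := by
  have h := integral_image_eq_integral_abs_deriv_smul (measurableSet_Icc (a := a) (b := b))
    (fun x _ => (Real.hasDerivAt_exp x).hasDerivWithinAt)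
    Real.exp_injective.injOn f
  rw [erdos_exp_image hab] at h
  rw [h]
  apply setIntegral_congr_fun measurableSet_Icc
  intro s _
  simp [abs_of_pos (Real.exp_pos s), smul_eq_mul]

lemma erdos_subst_int (f : ℝ → ℝ) {a b : ℝ} (hab : a ≤ b) :
    IntegrableOn f (Icc (Real.exp a) (Real.exp b)) volume ↔
      IntegrableOn (fun s => Real.exp s * f (Real.exp s)) (Icc a b) volume := by
  have h := integrableOn_image_iff_integrableOn_abs_deriv_smul (measurableSet_Icc (a := a) (b := b))
    (fun x _ => (Real.hasDerivAt_exp x).hasDerivWithinAt)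
    Real.exp_injective.injOn f
  rw [erdos_exp_image hab] at h
  rw [h]
  constructor <;> intro hint <;> apply hint.congr_fun _ measurableSet_Icc <;>
    intro s _ <;> simp [abs_of_pos (Real.exp_pos s), smul_eq_mul]

lemma erdos_phi_eq : (fun s => Real.exp s * (g (Real.exp s) / (Real.exp s) ^ 2)) = erdosPhi g := by
  funext s
  have : Real.exp s ≠ 0 := (Real.exp_pos s).ne'
  rw [erdosPhi]
  field_simp

lemma erdos_phi_abs_eq :
    (fun s => Real.exp s * (|g (Real.exp s)| / (Real.exp s) ^ 2)) = fun s => |erdosPhi g s| := by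
  funext s
  have h0 : (0:ℝ) < Real.exp s := Real.exp_pos s
  rw [erdosPhi, abs_div, abs_of_pos h0]
  field_simp

lemma erdos_one_le_exp {a : ℝ} (ha : 0 ≤ a) : (1:ℝ) ≤ Real.exp a :=
  Real.exp_zero ▸ Real.exp_le_exp.2 ha

lemma erdos_phi_integrableOn (hmono : Monotone fun t => g t + M * t) {a b : ℝ}
    (ha : 0 ≤ a) (hab : a ≤ b) : IntegrableOn (erdosPhi g) (Icc a b) volume := by
  have h1 : IntegrableOn (fun t => g t / t ^ 2) (Icc (Real.exp a) (Real.exp b)) volume :=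
    (intervalIntegrable_iff_integrableOn_Icc_of_le (Real.exp_le_exp.2 hab)).1
      (erdos_gii hmono (erdos_one_le_exp ha) (Real.exp_le_exp.2 hab))
  have := (erdos_subst_int (fun t => g t / t ^ 2) hab).1 h1
  rwa [erdos_phi_eq] at this

lemma erdos_phi_abs_integrableOn (hmono : Monotone fun t => g t + M * t) {a b : ℝ}
    (ha : 0 ≤ a) (hab : a ≤ b) : IntegrableOn (fun s => |erdosPhi g s|) (Icc a b) volume :=
  (erdos_phi_integrableOn hmono ha hab).abs

lemma erdos_phi_intervalIntegral (hmono : Monotone fun t => g t + M * t) {a b : ℝ}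
    (ha : 0 ≤ a) (hab : a ≤ b) :
    ∫ s in a..b, erdosPhi g s = ∫ t in Real.exp a..Real.exp b, g t / t ^ 2 := by
  rw [intervalIntegral.integral_of_le hab,
    intervalIntegral.integral_of_le (Real.exp_le_exp.2 hab),
    ← integral_Icc_eq_integral_Ioc, ← integral_Icc_eq_integral_Ioc,
    erdos_subst (fun t => g t / t ^ 2) hab, erdos_phi_eq]

lemma erdos_phi_abs_intervalIntegral (hmono : Monotone fun t => g t + M * t) {a b : ℝ}
    (ha : 0 ≤ a) (hab : a ≤ b) :
    ∫ s in a..b, |erdosPhi g s| = ∫ t in Real.exp a..Real.exp b, |g t| / t ^ 2 := by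
  rw [intervalIntegral.integral_of_le hab,
    intervalIntegral.integral_of_le (Real.exp_le_exp.2 hab),
    ← integral_Icc_eq_integral_Ioc, ← integral_Icc_eq_integral_Ioc,
    erdos_subst (fun t => |g t| / t ^ 2) hab, erdos_phi_abs_eq]

lemma erdos_phi_bound2M' (hmono : Monotone fun t => g t + M * t)
    (h2 : ∀ x : ℝ, 1 ≤ x → |∫ t in (1:ℝ)..x, g t / t ^ 2| ≤ M')
    {s₁ s₂ : ℝ} (h0 : 0 ≤ s₁) (h12 : s₁ ≤ s₂) :
    |∫ s in s₁..s₂, erdosPhi g s| ≤ 2 * M' := by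
  rw [erdos_phi_intervalIntegral hmono h0 h12]
  exact erdos_key2 hmono h2 (erdos_one_le_exp h0) (Real.exp_le_exp.2 h12)

lemma erdos_phi_lip (hmono : Monotone fun t => g t + M * t) (hM : 0 ≤ M) {S : ℝ} (hS : 0 ≤ S)
    {s₁ s₂ : ℝ} (h0 : 0 ≤ s₁) (h12 : s₁ ≤ s₂) (hb : erdosPhi g s₁ ≤ S) :
    erdosPhi g s₁ - (M + S) * (s₂ - s₁) ≤ erdosPhi g s₂ := by
  set x := Real.exp s₁ with hxdef
  set y := Real.exp s₂ with hydef
  have hx0 : 0 < x := Real.exp_pos s₁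
  have hy0 : 0 < y := Real.exp_pos s₂
  have hxy : x ≤ y := Real.exp_le_exp.2 h12
  have hmono' : g x + M * x ≤ g y + M * y := hmono hxy
  set r := x / y with hrdef
  have hr0 : 0 < r := by positivity
  have hr1 : r ≤ 1 := by
    rw [hrdef, div_le_one hy0]; exact hxy
  have hrexp : r = Real.exp (s₁ - s₂) := by
    rw [hrdef, hxdef, hydef, Real.exp_sub]
  have h1mr : 1 - r ≤ s₂ - s₁ := by
    have := Real.add_one_le_exp (s₁ - s₂)
    rw [← hrexp] at this
    linarith
  have hstep : erdosPhi g s₁ * r - M * (1 - r) ≤ erdosPhi g s₂ := by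
    have hdiv : (g x - M * (y - x)) / y ≤ g y / y :=
      div_le_div_of_nonneg_right (by linarith) hy0.le
    have heq : (g x - M * (y - x)) / y = (g x / x) * (x / y) - M * (1 - x / y) := by
      field_simp
      try ring
    rw [heq] at hdiv
    exact hdiv
  have hd0 : 0 ≤ s₂ - s₁ := by linarith
  rcases le_or_gt 0 (erdosPhi g s₁) with hpos | hneg
  · nlinarith [mul_le_mul_of_nonneg_left h1mr hpos, mul_le_mul_of_nonneg_right hb hd0]
  · nlinarith [mul_le_mul_of_nonneg_left h1mr hM, mul_le_mul_of_nonpos_left hr1 hneg.le]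








lemma erdos_growth (hmono : Monotone fun t => g t + M * t)
    (h2 : ∀ x : ℝ, 1 ≤ x → |∫ t in (1:ℝ)..x, g t / t ^ 2| ≤ M')
    (hM : 0 ≤ M) (hM' : 0 ≤ M') {x : ℝ} (hx : 2 ≤ x) :
    |g x| ≤ (4 * M' + 3 * M) * x := by
  have hx1 : (1:ℝ) ≤ x := by linarith
  have hx0 : (0:ℝ) < x := by linarith
  have hlog2 : Real.log 2 ≤ 1 := by
    have := Real.log_two_lt_d9
    linarith
  have hlog2' : 0 ≤ Real.log 2 := Real.log_nonneg (by norm_num)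
  -- upper bound
  have hup : g x ≤ (4 * M' + 2 * M) * x := by
    have hptw : ∀ t ∈ Icc x (2*x), (g x + M * x - M * t) / t ^ 2 ≤ g t / t ^ 2 := by
      intro t ht
      have h1t : g x + M * x ≤ g t + M * t := hmono ht.1
      have ht0 : (0:ℝ) < t ^ 2 := by nlinarith [ht.1]
      apply div_le_div_of_nonneg_right (by linarith) ht0.le
    have hint1 : IntervalIntegrable (fun t => (g x + M * x - M * t) / t ^ 2) volume x (2*x) := by
      apply ContinuousOn.intervalIntegrable
      apply ContinuousOn.div
      · exact (continuous_const.sub (continuous_const.mul continuous_id)).continuousOn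
      · exact continuousOn_pow 2
      · intro t ht
        rw [uIcc_of_le (by linarith)] at ht
        have : (0:ℝ) < t := lt_of_lt_of_le hx0 ht.1
        positivity
    have hmle := intervalIntegral.integral_mono_on (by linarith : x ≤ 2*x) hint1
      (erdos_gii hmono hx1 (by linarith)) hptw
    rw [erdos_intlin hx0 (by linarith)] at hmle
    have hkey := erdos_key2 hmono h2 hx1 (by linarith : x ≤ 2*x)
    have hle : ∫ t in x..(2*x), g t / t ^ 2 ≤ 2 * M' := le_of_abs_le hkey
    have hlg : Real.log (2*x) = Real.log 2 + Real.log x :=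
      Real.log_mul (by norm_num) (ne_of_gt hx0)
    have hinv : x⁻¹ - (2*x)⁻¹ = (2*x)⁻¹ := by
      field_simp
      ring
    rw [hinv, hlg] at hmle
    have h5 : (g x + M * x) * (2*x)⁻¹ ≤ 2 * M' + M * Real.log 2 := by linarith
    have h2x : (0:ℝ) < 2*x := by linarith
    have h6 : g x + M * x ≤ (2 * M' + M * Real.log 2) * (2*x) := by
      calc g x + M * x = ((g x + M * x) * (2*x)⁻¹) * (2*x) := by field_simp
        _ ≤ (2 * M' + M * Real.log 2) * (2*x) := mul_le_mul_of_nonneg_right h5 h2x.le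
    nlinarith [mul_le_mul_of_nonneg_right (mul_le_mul_of_nonneg_left hlog2 hM) hx0.le]
  -- lower bound
  have hdown : -((2 * M' + 2 * M) * x) ≤ g x := by
    have hx2 : (1:ℝ) ≤ x / 2 := by linarith
    have hx20 : (0:ℝ) < x / 2 := by linarith
    have hptw : ∀ t ∈ Icc (x/2) x, g t / t ^ 2 ≤ (g x + M * x - M * t) / t ^ 2 := by
      intro t ht
      have h1t : g t + M * t ≤ g x + M * x := hmono ht.2
      have ht0 : (0:ℝ) < t ^ 2 := by nlinarith [ht.1]
      apply div_le_div_of_nonneg_right (by linarith) ht0.le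
    have hint1 : IntervalIntegrable (fun t => (g x + M * x - M * t) / t ^ 2) volume (x/2) x := by
      apply ContinuousOn.intervalIntegrable
      apply ContinuousOn.div
      · exact (continuous_const.sub (continuous_const.mul continuous_id)).continuousOn
      · exact continuousOn_pow 2
      · intro t ht
        rw [uIcc_of_le (by linarith)] at ht
        have : (0:ℝ) < t := lt_of_lt_of_le hx20 ht.1
        positivity
    have hmle := intervalIntegral.integral_mono_on (by linarith : x/2 ≤ x)
      (erdos_gii hmono hx2 (by linarith)) hint1 hptw
    rw [erdos_intlin hx20 (by linarith)] at hmle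
    have hkey := erdos_key2 hmono h2 hx2 (by linarith : x/2 ≤ x)
    have hge : -(2 * M') ≤ ∫ t in (x/2)..x, g t / t ^ 2 := neg_le_of_abs_le hkey
    have hlg : Real.log (x/2) = Real.log x - Real.log 2 := by
      rw [Real.log_div (ne_of_gt hx0) (by norm_num)]
    have hinv : (x/2)⁻¹ - x⁻¹ = x⁻¹ := by
      field_simp
      ring
    rw [hinv, hlg] at hmle
    have h5 : -(2*M') - M * Real.log 2 ≤ (g x + M * x) * x⁻¹ := by nlinarith [mul_nonneg hM hlog2']
    have h6 : (-(2*M') - M * Real.log 2) * x ≤ g x + M * x := by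
      calc (-(2*M') - M * Real.log 2) * x ≤ ((g x + M * x) * x⁻¹) * x :=
            mul_le_mul_of_nonneg_right h5 hx0.le
        _ = g x + M * x := by field_simp
    nlinarith [mul_le_mul_of_nonneg_right (mul_le_mul_of_nonneg_left hlog2 hM) hx0.le]
  rw [abs_le]
  constructor
  · nlinarith
  · nlinarith




lemma erdos_density (φ : ℝ → ℝ) (hφm : Measurable φ) {S M' a b : ℝ}
    (hS : 0 < S) (hab : a ≤ b)
    (hint : IntegrableOn φ (Icc a b) volume)
    (hintb : |∫ s in a..b, φ s| ≤ 2 * M')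
    (hup : ∀ s ∈ Ioo a b, φ s < S / 2) :
    (volume (Ioo a b ∩ φ ⁻¹' (Iic (-(S/2))))).toReal ≤ (b - a) / 2 + 2 * M' / S := by
  set E := Ioo a b ∩ φ ⁻¹' (Iic (-(S/2))) with hE
  have hEmeas : MeasurableSet E := measurableSet_Ioo.inter (hφm measurableSet_Iic)
  have hEsub : E ⊆ Ioo a b := inter_subset_left
  have hEfin : volume E ≠ ⊤ :=
    ne_of_lt (lt_of_le_of_lt (measure_mono hEsub) measure_Ioo_lt_top)
  have hdifffin : volume (Ioo a b \ E) ≠ ⊤ :=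
    ne_of_lt (lt_of_le_of_lt (measure_mono diff_subset) measure_Ioo_lt_top)
  have hintIoo : IntegrableOn φ (Ioo a b) volume := hint.mono_set Ioo_subset_Icc_self
  have hintE : IntegrableOn φ E volume := hintIoo.mono_set hEsub
  have hintdiff : IntegrableOn φ (Ioo a b \ E) volume := hintIoo.mono_set diff_subset
  set m := (volume E).toReal with hm
  have hm0 : 0 ≤ m := ENNReal.toReal_nonneg
  have hsplit : ∫ s in Ioo a b, φ s = (∫ s in E, φ s) + ∫ s in Ioo a b \ E, φ s := by
    have h := setIntegral_union disjoint_sdiff_right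
      (measurableSet_Ioo.diff hEmeas) hintE hintdiff
    rw [Set.union_diff_cancel hEsub] at h
    exact h
  have hvol_diff : (volume (Ioo a b \ E)).toReal = (b - a) - m := by
    have h1 : volume (Ioo a b ∩ E) + volume (Ioo a b \ E) = volume (Ioo a b) :=
      measure_inter_add_diff (μ := volume) _ hEmeas
    rw [inter_eq_self_of_subset_right hEsub] at h1
    have h2 : (volume (Ioo a b)).toReal = b - a := by
      rw [Real.volume_Ioo, ENNReal.toReal_ofReal (by linarith)]
    have h3 := congrArg ENNReal.toReal h1
    rw [ENNReal.toReal_add hEfin hdifffin, h2] at h3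
    linarith
  have hb1 : ∫ s in E, φ s ≤ (-(S/2)) * m := by
    have h := setIntegral_mono_on hintE
      (integrableOn_const (ne_of_lt (lt_of_le_of_lt (measure_mono hEsub) measure_Ioo_lt_top)))
      hEmeas (fun s hs => hs.2)
    rw [setIntegral_const, smul_eq_mul, measureReal_def] at h
    linarith [h]
  have hb2 : ∫ s in Ioo a b \ E, φ s ≤ (S/2) * ((b - a) - m) := by
    have h := setIntegral_mono_on hintdiff
      (integrableOn_const (ne_of_lt (lt_of_le_of_lt (measure_mono diff_subset) measure_Ioo_lt_top)))
      (measurableSet_Ioo.diff hEmeas) (fun s hs => (hup s hs.1).le)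
    rw [setIntegral_const, smul_eq_mul, measureReal_def, hvol_diff] at h
    linarith [h]
  have hlower : -(2 * M') ≤ ∫ s in Ioo a b, φ s := by
    have h := neg_le_of_abs_le hintb
    rw [intervalIntegral.integral_of_le hab, MeasureTheory.integral_Ioc_eq_integral_Ioo] at h
    exact h
  have hSm : S * m ≤ (S/2) * (b - a) + 2 * M' := by nlinarith
  have h2 : S * (2 * M' / S) = 2 * M' := by field_simp
  nlinarith

lemma erdos_window (φ : ℝ → ℝ) (hφm : Measurable φ) {S B M₁ M' σ₀ L : ℝ}
    (hS : 0 < S) (hSB : S ≤ B) (hM₁ : 0 < M₁) (hM' : 0 ≤ M') (hσ₀ : 0 ≤ σ₀)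
    (hL : 16 * M' / S + S / M₁ + 1 ≤ L)
    (hbound : ∀ s, σ₀ ≤ s → |φ s| ≤ B)
    (hlip : ∀ s₁ s₂, σ₀ ≤ s₁ → s₁ ≤ s₂ → φ s₁ - M₁ * (s₂ - s₁) ≤ φ s₂)
    (hintb : ∀ s₁ s₂ : ℝ, 0 ≤ s₁ → s₁ ≤ s₂ → |∫ s in s₁..s₂, φ s| ≤ 2 * M')
    (hintg : ∀ a b : ℝ, 0 ≤ a → a ≤ b → IntegrableOn φ (Icc a b) volume)
    {w : ℝ} (hw : σ₀ ≤ w) :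
    ∫ s in w..(w+L), |φ s| ≤ B * L - (S/2) * min (S/M₁) (L/4) := by
  have hτpos : 0 < S / M₁ := div_pos hS hM₁
  have hM'S : 0 ≤ 16 * M' / S := by positivity
  have hL0 : 0 < L := by linarith
  set τ' := min (S/M₁) (L/4) with hτ'
  have hτ'pos : 0 < τ' := lt_min hτpos (by linarith)
  have hτ'le : τ' ≤ S / M₁ := min_le_left _ _
  set D := {s : ℝ | |φ s| ≤ S/2} with hD
  have hDmeas : MeasurableSet D := by
    have : D = (fun s => |φ s|) ⁻¹' (Iic (S/2)) := rfl
    rw [this]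
    exact hφm.abs measurableSet_Iic
  have hw0 : 0 ≤ w := le_trans hσ₀ hw
  have hIccfin : volume (Icc w (w+L)) ≠ ⊤ := ne_of_lt measure_Icc_lt_top
  have hinterfin : volume (Icc w (w+L) ∩ D) ≠ ⊤ :=
    ne_of_lt (lt_of_le_of_lt (measure_mono inter_subset_left) measure_Icc_lt_top)
  have hdifffin : volume (Icc w (w+L) \ D) ≠ ⊤ :=
    ne_of_lt (lt_of_le_of_lt (measure_mono diff_subset) measure_Icc_lt_top)
  -- Main claim : the small set D has measure ≥ τ' in the window
  have hv : τ' ≤ (volume (Icc w (w+L) ∩ D)).toReal := by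
    by_cases hcross : ∃ σ₁ ∈ Icc w (w+L), ∃ σ₂ ∈ Icc w (w+L),
        σ₁ ≤ σ₂ ∧ S/2 ≤ φ σ₁ ∧ φ σ₂ ≤ -(S/2)
    · -- crossing case: an interval of length S/M₁ inside D
      obtain ⟨σ₁, hσ₁, σ₂, hσ₂, h12, hφ1, hφ2⟩ := hcross
      set A := {s ∈ Icc σ₁ σ₂ | S/2 ≤ φ s} with hA
      have hA_ne : σ₁ ∈ A := ⟨⟨le_rfl, h12⟩, hφ1⟩
      have hA_bdd : BddAbove A := (bddAbove_Icc (a := σ₁) (b := σ₂)).mono (fun x hx => hx.1)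
      set u := sSup A with hu
      have hu_ge : σ₁ ≤ u := le_csSup hA_bdd hA_ne
      have hu_le : u ≤ σ₂ := csSup_le ⟨σ₁, hA_ne⟩ (fun x hx => hx.1.2)
      have hσ₁σ₀ : σ₀ ≤ σ₁ := le_trans hw hσ₁.1
      have huσ₀ : σ₀ ≤ u := le_trans hσ₁σ₀ hu_ge
      have hφu : S/2 ≤ φ u := by
        by_contra hcon
        push_neg at hcon
        have hη : 0 < (S/2 - φ u) / M₁ := div_pos (by linarith) hM₁
        obtain ⟨v, hvA, hvlt⟩ := exists_lt_of_lt_csSup ⟨σ₁, hA_ne⟩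
          (show u - (S/2 - φ u) / M₁ < u by linarith)
        have hvu : v ≤ u := le_csSup hA_bdd hvA
        have hlipvu := hlip v u (le_trans hσ₁σ₀ hvA.1.1) hvu
        have hmul : M₁ * (u - v) < M₁ * ((S/2 - φ u) / M₁) :=
          mul_lt_mul_of_pos_left (by linarith) hM₁
        rw [mul_div_cancel₀ _ (ne_of_gt hM₁)] at hmul
        have := hvA.2
        linarith
      have hτseq : u + S/M₁ ≤ σ₂ := by
        have hlipu := hlip u σ₂ huσ₀ hu_le
        have : S / M₁ ≤ σ₂ - u := by
          rw [div_le_iff₀ hM₁]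
          nlinarith
        linarith
      have hIoo_sub : Ioo u (u + S/M₁) ⊆ Icc w (w+L) ∩ D := by
        intro s hs
        have hsu : u < s := hs.1
        have hsub : s < u + S/M₁ := hs.2
        have hs12 : s ∈ Icc σ₁ σ₂ := ⟨le_trans hu_ge hsu.le, le_trans hsub.le hτseq⟩
        constructor
        · exact ⟨le_trans hσ₁.1 hs12.1, le_trans hs12.2 hσ₂.2⟩
        · have hsnA : s ∉ A := fun hsA => absurd (le_csSup hA_bdd hsA) (not_le.2 hsu)
          have hup : φ s < S/2 := by
            by_contra hcon
            push_neg at hcon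
            exact hsnA ⟨hs12, hcon⟩
          have hlow : -(S/2) < φ s := by
            have hlips := hlip u s huσ₀ hsu.le
            have hmul : M₁ * (s - u) < M₁ * (S/M₁) := mul_lt_mul_of_pos_left (by linarith) hM₁
            rw [mul_div_cancel₀ _ (ne_of_gt hM₁)] at hmul
            linarith
          exact abs_le.2 ⟨hlow.le, hup.le⟩
      have hh : (volume (Ioo u (u + S/M₁))).toReal ≤ (volume (Icc w (w+L) ∩ D)).toReal :=
        ENNReal.toReal_mono hinterfin (measure_mono hIoo_sub)
      rw [Real.volume_Ioo, ENNReal.toReal_ofReal (by linarith)] at hh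
      calc τ' ≤ S/M₁ := hτ'le
        _ ≤ _ := by linarith [hh]
    · -- no-crossing case
      push_neg at hcross
      set U := {s ∈ Icc w (w+L) | S/2 ≤ φ s} with hU
      set c := sInf (U ∪ {w + L}) with hc
      have hUbdd : BddBelow (U ∪ {w+L}) := by
        apply (bddBelow_Icc (a := w+L) (b := w)).mono
        rintro x (hx | hx)
        · exact hx.1
        · rw [mem_singleton_iff] at hx
          subst hx
          exact ⟨by linarith, le_rfl⟩
      have hUne : (U ∪ {w+L}).Nonempty := ⟨w+L, Or.inr rfl⟩
      have hcw : w ≤ c := by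
        apply le_csInf hUne
        rintro x (hx | hx)
        · exact hx.1.1
        · rw [mem_singleton_iff] at hx
          subst hx
          linarith
      have hcwL : c ≤ w + L := csInf_le hUbdd (Or.inr rfl)
      have fact1 : ∀ s ∈ Icc w (w+L), s < c → φ s < S/2 := by
        intro s hs hsc
        by_contra hcon
        push_neg at hcon
        have : c ≤ s := csInf_le hUbdd (Or.inl ⟨hs, hcon⟩)
        linarith
      have fact2 : ∀ s ∈ Icc w (w+L), c < s → -(S/2) < φ s := by
        intro s hs hcs
        by_contra hcon
        push_neg at hcon
        obtain ⟨x, hx, hxs⟩ := exists_lt_of_csInf_lt hUne hcs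
        rcases hx with hxU | hxL
        · exact absurd (hcross x hxU.1 s hs hxs.le hxU.2) (not_lt.2 hcon)
        · rw [mem_singleton_iff] at hxL
          subst hxL
          linarith [hs.2]
      set E₁ := Ioo w c ∩ φ ⁻¹' (Iic (-(S/2))) with hE₁
      set E₂ := Ioo c (w+L) ∩ (fun s => -φ s) ⁻¹' (Iic (-(S/2))) with hE₂
      have hm₁ : (volume E₁).toReal ≤ (c - w)/2 + 2 * M' / S := by
        apply erdos_density φ hφm hS hcw (hintg w c hw0 hcw) (hintb w c hw0 hcw)
        intro s hs
        exact fact1 s ⟨hs.1.le, le_trans hs.2.le hcwL⟩ hs.2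
      have hm₂ : (volume E₂).toReal ≤ ((w+L) - c)/2 + 2 * M' / S := by
        apply erdos_density (fun s => -φ s) hφm.neg hS hcwL
          ((hintg c (w+L) (le_trans hw0 hcw) hcwL).neg)
        · rw [intervalIntegral.integral_neg, abs_neg]
          exact hintb c (w+L) (le_trans hw0 hcw) hcwL
        · intro s hs
          have := fact2 s ⟨le_trans hcw hs.1.le, hs.2.le⟩ hs.1
          change -φ s < S/2
          linarith
      have hcover : Icc w (w+L) \ D ⊆ E₁ ∪ E₂ ∪ ({w, c, w+L} : Set ℝ) := by
        intro s hs
        obtain ⟨hsI, hsD⟩ := hs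
        have habs : S/2 < |φ s| := not_le.1 hsD
        rcases lt_trichotomy s c with hsc | hsc | hsc
        · rcases eq_or_lt_of_le hsI.1 with hsw | hsw
          · exact Or.inr (Or.inl hsw.symm)
          · left; left
            refine ⟨⟨hsw, hsc⟩, ?_⟩
            have hup := fact1 s hsI hsc
            rcases lt_abs.1 habs with h | h
            · linarith
            · simp only [mem_preimage, mem_Iic]
              linarith
        · exact Or.inr (Or.inr (Or.inl hsc))
        · rcases eq_or_lt_of_le hsI.2 with hswL | hswL
          · exact Or.inr (Or.inr (Or.inr hswL))
          · left; right
            refine ⟨⟨hsc, hswL⟩, ?_⟩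
            have hlow := fact2 s hsI hsc
            rcases lt_abs.1 habs with h | h
            · simp only [mem_preimage, mem_Iic]
              linarith
            · linarith
      have hFzero : volume ({w, c, w+L} : Set ℝ) = 0 :=
        (((Set.finite_singleton (w+L)).insert c).insert w).measure_zero volume
      have hE₁fin : volume E₁ ≠ ⊤ :=
        ne_of_lt (lt_of_le_of_lt (measure_mono inter_subset_left) measure_Ioo_lt_top)
      have hE₂fin : volume E₂ ≠ ⊤ :=
        ne_of_lt (lt_of_le_of_lt (measure_mono inter_subset_left) measure_Ioo_lt_top)
      have hbadle : volume (Icc w (w+L) \ D) ≤ volume E₁ + volume E₂ := by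
        calc volume (Icc w (w+L) \ D) ≤ volume (E₁ ∪ E₂ ∪ ({w, c, w+L} : Set ℝ)) :=
              measure_mono hcover
          _ ≤ volume (E₁ ∪ E₂) + volume ({w, c, w+L} : Set ℝ) := measure_union_le _ _
          _ = volume (E₁ ∪ E₂) := by rw [hFzero, add_zero]
          _ ≤ volume E₁ + volume E₂ := measure_union_le _ _
      have hbad : (volume (Icc w (w+L) \ D)).toReal
          ≤ (volume E₁).toReal + (volume E₂).toReal := by
        have := ENNReal.toReal_mono (ENNReal.add_ne_top.2 ⟨hE₁fin, hE₂fin⟩) hbadle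
        rwa [ENNReal.toReal_add hE₁fin hE₂fin] at this
      have hvolIcc : (volume (Icc w (w+L))).toReal = L := by
        rw [Real.volume_Icc, ENNReal.toReal_ofReal (by linarith)]
        ring
      have hsum : (volume (Icc w (w+L) ∩ D)).toReal + (volume (Icc w (w+L) \ D)).toReal = L := by
        have h1 := measure_inter_add_diff (μ := volume) (Icc w (w+L)) hDmeas
        have h3 := congrArg ENNReal.toReal h1
        rw [ENNReal.toReal_add hinterfin hdifffin, hvolIcc] at h3
        exact h3
      have hvge : (volume (Icc w (w+L) ∩ D)).toReal ≥ L/2 - 4 * M' / S := by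
        have h45 : 2 * (2 * M' / S) = 4 * M' / S := by ring
        linarith [hm₁, hm₂, hsum, hbad]
      calc τ' ≤ L/4 := min_le_right _ _
        _ ≤ _ := by
          have h16 : 4 * M' / S = (16 * M' / S) / 4 := by ring
          linarith [hvge, h16]
  -- final computation
  have hintabs : IntegrableOn (fun s => |φ s|) (Icc w (w+L)) volume :=
    (hintg w (w+L) hw0 (by linarith)).abs
  rw [intervalIntegral.integral_of_le (by linarith : w ≤ w + L),
    ← MeasureTheory.integral_Icc_eq_integral_Ioc]
  have hsplit : ∫ s in Icc w (w+L), |φ s|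
      = (∫ s in Icc w (w+L) ∩ D, |φ s|) + ∫ s in Icc w (w+L) \ D, |φ s| := by
    have h := setIntegral_union (disjoint_sdiff_inter (s := Icc w (w+L)) (t := D)).symm
      (measurableSet_Icc.diff hDmeas) (hintabs.mono_set inter_subset_left)
      (hintabs.mono_set diff_subset)
    rw [Set.inter_union_diff] at h
    exact h
  rw [hsplit]
  set v := (volume (Icc w (w+L) ∩ D)).toReal with hvdef
  have hv0 : 0 ≤ v := ENNReal.toReal_nonneg
  have hsum : v + (volume (Icc w (w+L) \ D)).toReal = L := by
    have h1 := measure_inter_add_diff (μ := volume) (Icc w (w+L)) hDmeas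
    have h3 := congrArg ENNReal.toReal h1
    rw [ENNReal.toReal_add hinterfin hdifffin] at h3
    rw [Real.volume_Icc] at h3
    rw [ENNReal.toReal_ofReal (by linarith)] at h3
    linarith [h3]
  have hb1 : ∫ s in Icc w (w+L) ∩ D, |φ s| ≤ (S/2) * v := by
    have h := setIntegral_mono_on (hintabs.mono_set inter_subset_left)
      (integrableOn_const (ne_of_lt (lt_of_le_of_lt (measure_mono inter_subset_left)
        measure_Icc_lt_top)))
      (measurableSet_Icc.inter hDmeas) (fun s hs => hs.2)
    rw [setIntegral_const, smul_eq_mul, measureReal_def] at h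
    linarith [h]
  have hb2 : ∫ s in Icc w (w+L) \ D, |φ s| ≤ B * (L - v) := by
    have h := setIntegral_mono_on (hintabs.mono_set diff_subset)
      (integrableOn_const (ne_of_lt (lt_of_le_of_lt (measure_mono diff_subset)
        measure_Icc_lt_top)))
      (measurableSet_Icc.diff hDmeas) (fun s hs => hbound s (le_trans hw hs.1.1))
    rw [setIntegral_const, smul_eq_mul, measureReal_def] at h
    have : (volume (Icc w (w+L) \ D)).toReal = L - v := by linarith [hsum]
    rw [this] at h
    linarith [h]
  have hkey1 : (B - S/2) * τ' ≤ (B - S/2) * v :=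
    mul_le_mul_of_nonneg_left hv (by linarith)
  have hkey2 : (S/2) * τ' ≤ (B - S/2) * τ' :=
    mul_le_mul_of_nonneg_right (by linarith) hτ'pos.le
  nlinarith




lemma erdos_iterate (φ : ℝ → ℝ) {σ₀ L β : ℝ} (hL0 : 0 < L) (hσ₀ : 0 ≤ σ₀)
    (hintg : ∀ a b : ℝ, 0 ≤ a → a ≤ b → IntegrableOn φ (Icc a b) volume)
    (hwindow : ∀ w : ℝ, σ₀ ≤ w → ∫ s in w..(w+L), |φ s| ≤ β) :
    ∀ n : ℕ, ∫ s in σ₀..(σ₀ + n*L), |φ s| ≤ n * β := by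
  have habsint : ∀ a b : ℝ, 0 ≤ a → a ≤ b → IntervalIntegrable (fun s => |φ s|) volume a b :=
    fun a b ha hab => (intervalIntegrable_iff_integrableOn_Icc_of_le hab).2 ((hintg a b ha hab).abs)
  intro n
  induction n with
  | zero => simp
  | succ n ih =>
    have hnL : (0:ℝ) ≤ n * L := by positivity
    have h1 : σ₀ ≤ σ₀ + n*L := by linarith
    have h2 : σ₀ + n*L ≤ σ₀ + n*L + L := by linarith
    have hadd := integral_add_adjacent_intervals
      (habsint σ₀ (σ₀ + n*L) hσ₀ h1)
      (habsint (σ₀ + n*L) (σ₀ + n*L + L) (by linarith) h2)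
    have hw := hwindow (σ₀ + n*L) (by linarith)
    have hcast : σ₀ + (n+1 : ℕ)*L = σ₀ + n*L + L := by push_cast; ring
    rw [hcast]
    rw [← hadd]
    push_cast
    nlinarith [ih, hw]


set_option maxHeartbeats 1000000 in
theorem erdos_aux (g : ℝ → ℝ) (M M' : ℝ) (hM : 0 ≤ M) (hM' : 0 ≤ M')
    (hmono : Monotone fun t => g t + M * t)
    (h2 : ∀ x : ℝ, 1 ≤ x → |∫ t in (1:ℝ)..x, g t / t ^ 2| ≤ M') :
    IsBoundedUnder (· ≤ ·) atTop (fun x : ℝ => |g x| / x) ∧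
    (0 < limsup (fun x : ℝ => |g x| / x) atTop →
      limsup (fun x : ℝ => (1 / Real.log x) * ∫ t in (1:ℝ)..x, |g t| / t ^ 2) atTop
        < limsup (fun x : ℝ => |g x| / x) atTop) := by
  have hbdd : IsBoundedUnder (· ≤ ·) atTop (fun x : ℝ => |g x| / x) := by
    refine ⟨4*M' + 3*M, ?_⟩
    rw [eventually_map]
    filter_upwards [eventually_ge_atTop (2:ℝ)] with x hx
    have hgx := erdos_growth hmono h2 hM hM' hx
    have hx0 : (0:ℝ) < x := by linarith
    rw [div_le_iff₀ hx0]
    exact hgx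
  refine ⟨hbdd, ?_⟩
  intro hS
  set S := limsup (fun x : ℝ => |g x| / x) atTop with hSdef
  have hφm : Measurable (erdosPhi g) := by
    have hgm := erdos_gmeas hmono
    exact (hgm.comp Real.measurable_exp).div Real.measurable_exp
  set M₁ : ℝ := M + (S + 1) with hM₁def
  have hM₁ : 0 < M₁ := by rw [hM₁def]; linarith
  set L : ℝ := 16 * M' / S + S / M₁ + 1 with hLdef
  have hτpos : 0 < S / M₁ := div_pos hS hM₁
  have hM'S : 0 ≤ 16 * M' / S := by positivity
  have hL0 : 0 < L := by rw [hLdef]; linarith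
  set τ' : ℝ := min (S / M₁) (L / 4) with hτ'def
  have hτ'pos : 0 < τ' := lt_min hτpos (by linarith)
  have hτ'L4 : τ' ≤ L/4 := min_le_right _ _
  set δ : ℝ := (S/2) * τ' / (2 * L) with hδdef
  have hδ0 : 0 < δ := by rw [hδdef]; positivity
  have hδS : δ ≤ S / 16 := by
    have h1 : (S/2) * τ' ≤ (S/2) * (L/4) := mul_le_mul_of_nonneg_left hτ'L4 (by linarith)
    have h2' : (S/2) * (L/4) / (2*L) = S/16 := by field_simp; ring
    calc δ = (S/2)*τ'/(2*L) := hδdef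
      _ ≤ (S/2)*(L/4)/(2*L) := div_le_div_of_nonneg_right h1 (by linarith)
      _ = S/16 := h2'
  set ε : ℝ := min δ 1 with hεdef
  have hε0 : 0 < ε := lt_min hδ0 one_pos
  have hε1 : ε ≤ 1 := min_le_right _ _
  have hεδ : ε ≤ δ := min_le_left _ _
  clear_value M₁ L τ' δ ε
  have hlimlt : limsup (fun x : ℝ => |g x| / x) atTop < S + ε := by
    rw [← hSdef]; linarith
  have hev : ∀ᶠ x : ℝ in atTop, |g x| / x < S + ε :=
    eventually_lt_of_limsup_lt hlimlt hbdd
  obtain ⟨x₀, hx₀⟩ := eventually_atTop.1 hev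
  set σ₀ : ℝ := max (Real.log (max x₀ 1)) 0 with hσ₀def
  have hσ₀0 : 0 ≤ σ₀ := le_max_right _ _
  have hphibound : ∀ s : ℝ, σ₀ ≤ s → |erdosPhi g s| ≤ S + ε := by
    intro s hs
    have hxpos : (0:ℝ) < max x₀ 1 := lt_of_lt_of_le one_pos (le_max_right _ _)
    have hexp : max x₀ 1 ≤ Real.exp s := by
      rw [← Real.exp_log hxpos]
      exact Real.exp_le_exp.2 (le_trans (le_max_left _ _) hs)
    have hx : x₀ ≤ Real.exp s := le_trans (le_max_left _ _) hexp
    have h := hx₀ (Real.exp s) hx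
    have he0 : 0 < Real.exp s := Real.exp_pos s
    have habs : |erdosPhi g s| = |g (Real.exp s)| / Real.exp s := by
      rw [erdosPhi, abs_div, abs_of_pos he0]
    rw [habs]
    exact h.le
  clear_value σ₀
  have hlip : ∀ s₁ s₂ : ℝ, σ₀ ≤ s₁ → s₁ ≤ s₂ →
      erdosPhi g s₁ - M₁ * (s₂ - s₁) ≤ erdosPhi g s₂ := by
    intro s₁ s₂ hσ1 h12
    have hb : erdosPhi g s₁ ≤ S + 1 :=
      le_trans (le_of_abs_le (hphibound s₁ hσ1)) (by linarith)
    have h := erdos_phi_lip hmono hM (S := S + 1) (by linarith) (le_trans hσ₀0 hσ1) h12 hb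
    rw [hM₁def]
    exact h
  have hintb : ∀ s₁ s₂ : ℝ, 0 ≤ s₁ → s₁ ≤ s₂ → |∫ s in s₁..s₂, erdosPhi g s| ≤ 2 * M' :=
    fun s₁ s₂ h0 h12 => erdos_phi_bound2M' hmono h2 h0 h12
  have hintg : ∀ a b : ℝ, 0 ≤ a → a ≤ b → IntegrableOn (erdosPhi g) (Icc a b) volume :=
    fun a b ha hab => erdos_phi_integrableOn hmono ha hab
  have hwindow : ∀ w : ℝ, σ₀ ≤ w →
      ∫ s in w..(w+L), |erdosPhi g s| ≤ (S + ε) * L - (S/2) * τ' := by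
    intro w hw
    have h := erdos_window (erdosPhi g) hφm hS (by linarith : S ≤ S + ε) hM₁ hM' hσ₀0
      hLdef.ge hphibound hlip hintb hintg hw
    rw [← hτ'def] at h
    exact h
  have hβle : (S + ε) * L - (S/2) * τ' ≤ (S - δ) * L := by
    have hδL : δ * (2 * L) = (S/2) * τ' := by rw [hδdef]; field_simp
    nlinarith [mul_le_mul_of_nonneg_right hεδ hL0.le]
  have hiter := erdos_iterate (erdosPhi g) hL0 hσ₀0 hintg hwindow
  have hSδ : 0 < S - δ := by linarith
  have habsint : ∀ a b : ℝ, 0 ≤ a → a ≤ b →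
      IntervalIntegrable (fun u => |erdosPhi g u|) volume a b :=
    fun a b ha hab => (intervalIntegrable_iff_integrableOn_Icc_of_le hab).2 ((hintg a b ha hab).abs)
  have hkey : ∀ s : ℝ, σ₀ ≤ s → ∫ u in (0:ℝ)..s, |erdosPhi g u|
      ≤ (∫ u in (0:ℝ)..σ₀, |erdosPhi g u|) + (S+1) * L + (S - δ) * s := by
    intro s hs
    set n := Nat.floor ((s - σ₀)/L) with hn
    clear_value n
    have hfl0 : 0 ≤ (s - σ₀)/L := div_nonneg (by linarith) hL0.le
    have hnle : (n:ℝ) * L ≤ s - σ₀ := by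
      have h := Nat.floor_le hfl0
      rw [← hn] at h
      calc (n:ℝ)*L ≤ ((s-σ₀)/L)*L := mul_le_mul_of_nonneg_right h hL0.le
        _ = s - σ₀ := by field_simp
    have hslt : s - σ₀ < ((n:ℝ)+1) * L := by
      have h := Nat.lt_floor_add_one ((s - σ₀)/L)
      rw [← hn] at h
      calc s - σ₀ = ((s-σ₀)/L)*L := by field_simp
        _ < ((n:ℝ)+1)*L := by
            apply mul_lt_mul_of_pos_right _ hL0
            exact_mod_cast h
    have hnL0 : (0:ℝ) ≤ (n:ℝ)*L := by positivity
    have hσn : σ₀ ≤ σ₀ + n*L := by linarith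
    have hsn : σ₀ + n*L ≤ s := by linarith
    have hI1 := habsint 0 σ₀ le_rfl hσ₀0
    have hI2 := habsint σ₀ (σ₀ + n*L) hσ₀0 hσn
    have hI3 := habsint (σ₀ + n*L) s (by linarith) hsn
    have hadd1 := integral_add_adjacent_intervals hI2 hI3
    have hadd2 := integral_add_adjacent_intervals hI1 (habsint σ₀ s hσ₀0 (by linarith))
    have htail : ∫ u in (σ₀ + n*L)..s, |erdosPhi g u| ≤ (S+1) * (s - (σ₀ + n*L)) := by
      have hpt : ∀ u ∈ Icc (σ₀ + n*L) s, |erdosPhi g u| ≤ S + 1 := fun u hu =>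
        le_trans (hphibound u (le_trans hσn hu.1)) (by linarith)
      have h := intervalIntegral.integral_mono_on hsn hI3 intervalIntegrable_const hpt
      rw [intervalIntegral.integral_const, smul_eq_mul] at h
      linarith [h]
    have htail2 : (S+1)*(s - (σ₀+n*L)) ≤ (S+1)*L :=
      mul_le_mul_of_nonneg_left (by linarith) (by linarith)
    have hmid : ∫ u in σ₀..(σ₀+n*L), |erdosPhi g u| ≤ (S - δ) * (s - σ₀) := by
      calc ∫ u in σ₀..(σ₀+n*L), |erdosPhi g u| ≤ n * ((S + ε) * L - (S/2) * τ') := hiter n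
        _ ≤ n * ((S-δ)*L) := mul_le_mul_of_nonneg_left hβle (Nat.cast_nonneg n)
        _ = (S-δ)*((n:ℝ)*L) := by ring
        _ ≤ (S-δ)*(s-σ₀) := mul_le_mul_of_nonneg_left hnle hSδ.le
    have hσs : (S-δ)*(s-σ₀) ≤ (S-δ)*s := by nlinarith [mul_nonneg hSδ.le hσ₀0]
    linarith [htail, htail2, hmid, hadd1, hadd2]
  have hev2 : ∀ᶠ x : ℝ in atTop,
      (1 / Real.log x) * ∫ t in (1:ℝ)..x, |g t| / t ^ 2 ≤ S - δ/2 := by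
    set C₂ := (∫ u in (0:ℝ)..σ₀, |erdosPhi g u|) + (S+1) * L with hC₂def
    set s₁ := max (max σ₀ 1) (2 * C₂ / δ) with hs₁def
    filter_upwards [Real.tendsto_log_atTop.eventually_ge_atTop s₁,
      eventually_ge_atTop (1:ℝ)] with x hlx hx1
    have hx0 : (0:ℝ) < x := by linarith
    have hlog1 : 1 ≤ Real.log x := le_trans (le_trans (le_max_right σ₀ 1) (le_max_left _ _)) hlx
    have hlogσ : σ₀ ≤ Real.log x := le_trans (le_trans (le_max_left σ₀ 1) (le_max_left _ _)) hlx
    have hlogpos : 0 < Real.log x := by linarith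
    have hC2 : 2 * C₂ / δ ≤ Real.log x := le_trans (le_max_right _ _) hlx
    have hid := erdos_phi_abs_intervalIntegral hmono (le_refl (0:ℝ)) hlogpos.le
    rw [Real.exp_zero, Real.exp_log hx0] at hid
    have hkx := hkey (Real.log x) hlogσ
    rw [hid] at hkx
    have hC2' : 2 * C₂ ≤ δ * Real.log x := by
      have h := mul_le_mul_of_nonneg_left hC2 hδ0.le
      have hδC : δ * (2 * C₂ / δ) = 2 * C₂ := by field_simp
      rw [hδC] at h
      linarith [h]
    have hle : ∫ t in (1:ℝ)..x, |g t| / t ^ 2 ≤ (S - δ/2) * Real.log x := by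
      nlinarith [hkx, hC2']
    calc (1 / Real.log x) * ∫ t in (1:ℝ)..x, |g t| / t ^ 2
        ≤ (1 / Real.log x) * ((S - δ/2) * Real.log x) :=
          mul_le_mul_of_nonneg_left hle (by positivity)
      _ = S - δ/2 := by field_simp
  have hcob : IsCoboundedUnder (· ≤ ·) atTop
      (fun x : ℝ => (1 / Real.log x) * ∫ t in (1:ℝ)..x, |g t| / t ^ 2) := by
    apply Filter.isCoboundedUnder_le_of_eventually_le atTop (x := 0)
    filter_upwards [eventually_ge_atTop (Real.exp 1)] with x hx
    have hx1 : (1:ℝ) ≤ x := le_trans (erdos_one_le_exp zero_le_one) hx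
    have hx0 : (0:ℝ) < x := by linarith
    have hlog : 0 ≤ Real.log x := Real.log_nonneg hx1
    have hint : 0 ≤ ∫ t in (1:ℝ)..x, |g t| / t ^ 2 :=
      intervalIntegral.integral_nonneg hx1 (fun t ht => by positivity)
    positivity
  calc limsup (fun x : ℝ => (1 / Real.log x) * ∫ t in (1:ℝ)..x, |g t| / t ^ 2) atTop
      ≤ S - δ/2 := Filter.limsup_le_of_le hcob hev2
    _ < S := by linarith

end ErdosAux

open Filter Real

/-- The Tauberian theorem attributed to Erdős. -/
theorem erdos_tauberian
    (g : ℝ → ℝ) (M M' : ℝ) (hM : 0 ≤ M) (hM' : 0 ≤ M')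
    (h1 : ∀ x y, 1 ≤ x → x ≤ y → g x + M * x ≤ g y + M * y)
    (h2 : ∀ x : ℝ, 1 ≤ x → |∫ t in (1:ℝ)..x, g t / t ^ 2| ≤ M') :
    IsBoundedUnder (· ≤ ·) atTop (fun x : ℝ => |g x| / x) ∧
    (0 < limsup (fun x : ℝ => |g x| / x) atTop →
      limsup (fun x : ℝ => (1 / Real.log x) * ∫ t in (1:ℝ)..x, |g t| / t ^ 2) atTop
        < limsup (fun x : ℝ => |g x| / x) atTop) := by
  set g₁ : ℝ → ℝ := fun t => g (max t 1) with hg₁def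
  have hmono₁ : Monotone (fun t => g₁ t + M * t) := by
    intro a b hab
    show g₁ a + M * a ≤ g₁ b + M * b
    simp only [hg₁def]
    have hmax : max a 1 ≤ max b 1 := max_le_max hab le_rfl
    have h := h1 (max a 1) (max b 1) (le_max_right a 1) hmax
    rcases le_total a 1 with ha | ha
    · rcases le_total b 1 with hb | hb
      · rw [max_eq_right ha, max_eq_right hb]
        have hMab : M * a ≤ M * b := mul_le_mul_of_nonneg_left hab hM
        linarith
      · rw [max_eq_right ha, max_eq_left hb] at h ⊢
        have hMa1 : M * a ≤ M * 1 := mul_le_mul_of_nonneg_left ha hM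
        linarith
    · have hb : 1 ≤ b := le_trans ha hab
      rw [max_eq_left ha, max_eq_left hb] at h ⊢
      exact h
  have h2₁ : ∀ x : ℝ, 1 ≤ x → |∫ t in (1:ℝ)..x, g₁ t / t ^ 2| ≤ M' := by
    intro x hx
    have heq : ∫ t in (1:ℝ)..x, g₁ t / t ^ 2 = ∫ t in (1:ℝ)..x, g t / t ^ 2 := by
      apply intervalIntegral.integral_congr
      intro t ht
      rw [Set.uIcc_of_le hx] at ht
      simp only [hg₁def]
      rw [max_eq_left ht.1]
    rw [heq]
    exact h2 x hx
  obtain ⟨hb₁, hl₁⟩ := erdos_aux g₁ M M' hM hM' hmono₁ h2₁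
  have heq : ∀ᶠ x : ℝ in atTop, |g₁ x| / x = |g x| / x := by
    filter_upwards [eventually_ge_atTop (1:ℝ)] with x hx
    simp only [hg₁def]
    rw [max_eq_left hx]
  have heqint : ∀ᶠ x : ℝ in atTop,
      (1 / Real.log x) * ∫ t in (1:ℝ)..x, |g₁ t| / t ^ 2
        = (1 / Real.log x) * ∫ t in (1:ℝ)..x, |g t| / t ^ 2 := by
    filter_upwards [eventually_ge_atTop (1:ℝ)] with x hx
    congr 1
    apply intervalIntegral.integral_congr
    intro t ht
    rw [Set.uIcc_of_le hx] at ht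
    simp only [hg₁def]
    rw [max_eq_left ht.1]
  have hls : limsup (fun x : ℝ => |g₁ x| / x) atTop
      = limsup (fun x : ℝ => |g x| / x) atTop := limsup_congr heq
  have hlsint : limsup (fun x : ℝ => (1 / Real.log x) * ∫ t in (1:ℝ)..x, |g₁ t| / t ^ 2) atTop
      = limsup (fun x : ℝ => (1 / Real.log x) * ∫ t in (1:ℝ)..x, |g t| / t ^ 2) atTop :=
    limsup_congr heqint
  constructor
  · obtain ⟨b, hb⟩ := hb₁
    refine ⟨b, ?_⟩
    rw [eventually_map] at hb ⊢
    filter_upwards [hb, heq] with x h1x h2x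
    rw [← h2x]
    exact h1x
  · intro hpos
    rw [← hls, ← hlsint]
    exact hl₁ (by rwa [hls])
end

section
/- Let f : [1,∞) → ℝ be any function and F(x) = Σ_{n ≤ x} f(x/n). Then for every x ≥ 1 the Tatuzawa–Iseki identity holds: f(x)·log x + Σ_{n ≤ x} Λ(n)·f(x/n) = Σ_{n ≤ x} μ(n)·log(x/n)·F(x/n), where the sums run over positive integers n ≤ x. -/
open Filter Real Finset ArithmeticFunction

lemma moebius_sum_divisors (k : ℕ) :
    ∑ d ∈ k.divisors, (moebius d : ℝ) = if k = 1 then 1 else 0 := by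
  have h := congrArg (fun g : ArithmeticFunction ℤ => g k)
    ArithmeticFunction.moebius_mul_coe_zeta
  simp only [ArithmeticFunction.coe_mul_zeta_apply, ArithmeticFunction.one_apply] at h
  have : ((∑ d ∈ k.divisors, (moebius d) : ℤ) : ℝ) = ((if k = 1 then 1 else 0 : ℤ) : ℝ) := by
    exact_mod_cast congrArg (fun z : ℤ => (z : ℝ)) h
  push_cast at this
  split_ifs at this ⊢ <;> simpa using this

lemma tiInnerSum (x : ℝ) (hx : 1 ≤ x) (k : ℕ) (hk : 1 ≤ k) :
    ∑ d ∈ k.divisors, (moebius d : ℝ) * Real.log (x / d)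
      = (if k = 1 then Real.log x else 0) + Λ k := by
  have hx0 : (0 : ℝ) < x := lt_of_lt_of_le one_pos hx
  have : ∀ d ∈ k.divisors, (moebius d : ℝ) * Real.log (x / d)
      = (moebius d : ℝ) * Real.log x - (moebius d : ℝ) * Real.log d := by
    intro d hd
    have hd0 : (d : ℝ) ≠ 0 := by
      have := Nat.pos_of_mem_divisors hd
      positivity
    rw [Real.log_div (ne_of_gt hx0) hd0]
    ring
  rw [Finset.sum_congr rfl this, Finset.sum_sub_distrib, ← Finset.sum_mul,
    moebius_sum_divisors]
  simp only [← ArithmeticFunction.log_apply]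
  rw [ArithmeticFunction.sum_moebius_mul_log_eq]
  split_ifs <;> ring

/-- The Tatuzawa–Iseki identity. -/
theorem tatuzawa_iseki
    (f : ℝ → ℝ)
    (F : ℝ → ℝ) (hF : ∀ x : ℝ, F x = ∑ n ∈ Finset.Icc 1 ⌊x⌋₊, f (x / n)) :
    ∀ x : ℝ, 1 ≤ x →
      f x * Real.log x + ∑ n ∈ Finset.Icc 1 ⌊x⌋₊, Λ n * f (x / n)
        = ∑ n ∈ Finset.Icc 1 ⌊x⌋₊,
            (moebius n : ℝ) * Real.log (x / n) * F (x / n) := by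
  intro x hx
  set N := ⌊x⌋₊ with hN
  have hN1 : 1 ≤ N := Nat.one_le_floor_iff x |>.mpr hx
  -- rewrite RHS as double sum
  have step1 : ∑ n ∈ Finset.Icc 1 N, (moebius n : ℝ) * Real.log (x / n) * F (x / n)
      = ∑ n ∈ Finset.Icc 1 N, ∑ m ∈ Finset.Icc 1 (N / n),
          (moebius n : ℝ) * Real.log (x / n) * f (x / (n * m)) := by
    apply Finset.sum_congr rfl
    intro n hn
    have hn1 : 1 ≤ n := (Finset.mem_Icc.mp hn).1
    rw [hF, Nat.floor_div_natCast, Finset.mul_sum]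
    apply Finset.sum_congr rfl
    intro m hm
    rw [div_div]
  -- swap to sum over divisors
  have step2 : ∑ n ∈ Finset.Icc 1 N, ∑ m ∈ Finset.Icc 1 (N / n),
          (moebius n : ℝ) * Real.log (x / n) * f (x / (n * m))
      = ∑ k ∈ Finset.Icc 1 N, ∑ d ∈ k.divisors,
          (moebius d : ℝ) * Real.log (x / d) * f (x / k) := by
    rw [Finset.sum_sigma', Finset.sum_sigma']
    apply Finset.sum_nbij' (fun p => ⟨p.1 * p.2, p.1⟩) (fun p => ⟨p.2, p.1 / p.2⟩)
    · rintro ⟨n, m⟩ h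
      simp only [Finset.mem_sigma, Finset.mem_Icc] at h
      obtain ⟨⟨hn1, hnN⟩, hm1, hmN⟩ := h
      have hn0 : 0 < n := hn1
      simp only [Finset.mem_sigma, Finset.mem_Icc, Nat.mem_divisors]
      refine ⟨⟨Nat.one_le_iff_ne_zero.mpr (by positivity), ?_⟩, dvd_mul_right n m, by positivity⟩
      calc n * m ≤ n * (N / n) := Nat.mul_le_mul_left n hmN
        _ ≤ N := Nat.mul_div_le N n
    · rintro ⟨k, d⟩ h
      simp only [Finset.mem_sigma, Finset.mem_Icc, Nat.mem_divisors] at h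
      obtain ⟨⟨hk1, hkN⟩, hd, hk0⟩ := h
      have hd0 : 0 < d := Nat.pos_of_dvd_of_pos hd hk1
      simp only [Finset.mem_sigma, Finset.mem_Icc]
      refine ⟨⟨hd0, le_trans (Nat.le_of_dvd hk1 hd) hkN⟩,
        Nat.one_le_div_iff hd0 |>.mpr (Nat.le_of_dvd hk1 hd), Nat.div_le_div_right hkN⟩
    · rintro ⟨n, m⟩ h
      simp only [Finset.mem_sigma, Finset.mem_Icc] at h
      have hn0 : 0 < n := h.1.1
      simp [Nat.mul_div_cancel_left _ hn0]
    · rintro ⟨k, d⟩ h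
      simp only [Finset.mem_sigma, Finset.mem_Icc, Nat.mem_divisors] at h
      simp [Nat.mul_div_cancel' h.2.1]
    · rintro ⟨n, m⟩ h
      push_cast
      norm_cast
  -- compute inner divisor sums
  have step3 : ∑ k ∈ Finset.Icc 1 N, ∑ d ∈ k.divisors,
          (moebius d : ℝ) * Real.log (x / d) * f (x / k)
      = ∑ k ∈ Finset.Icc 1 N, ((if k = 1 then Real.log x else 0) + Λ k) * f (x / k) := by
    apply Finset.sum_congr rfl
    intro k hk
    rw [← Finset.sum_mul, tiInnerSum x hx k (Finset.mem_Icc.mp hk).1]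
  rw [step1, step2, step3]
  have split : ∑ k ∈ Finset.Icc 1 N, ((if k = 1 then Real.log x else 0) + Λ k) * f (x / k)
      = (∑ k ∈ Finset.Icc 1 N, if k = 1 then Real.log x * f (x / k) else 0)
        + ∑ k ∈ Finset.Icc 1 N, Λ k * f (x / k) := by
    rw [← Finset.sum_add_distrib]
    apply Finset.sum_congr rfl
    intro k _
    split_ifs <;> ring
  rw [split, Finset.sum_ite_eq' (Finset.Icc 1 N) 1 (fun k => Real.log x * f (x / k)),
    if_pos (Finset.mem_Icc.mpr ⟨le_refl 1, hN1⟩)]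
  norm_num
  ring
end

section
/- For every positive integer n, Selberg's identity holds: Λ(n)·log n + Σ_{d | n} Λ(d)·Λ(n/d) = Σ_{d | n} μ(d)·log²(n/d), where the sums run over the positive divisors d of n. -/
open Real Finset ArithmeticFunction
open scoped ArithmeticFunction.zeta ArithmeticFunction.Moebius

lemma log_pmul_mul (f g : ArithmeticFunction ℝ) :
    (ArithmeticFunction.log).pmul (f * g)
      = ((ArithmeticFunction.log).pmul f) * g + f * ((ArithmeticFunction.log).pmul g) := by
  ext n
  simp only [pmul_apply, mul_apply, ArithmeticFunction.add_apply, log_apply,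
    ← Finset.sum_add_distrib, Finset.mul_sum]
  refine Finset.sum_congr rfl fun p hp => ?_
  obtain ⟨hpn, hn⟩ := Nat.mem_divisorsAntidiagonal.mp hp
  have h1 : p.1 ≠ 0 := by rintro h; rw [← hpn, h] at hn; simp at hn
  have h2 : p.2 ≠ 0 := by rintro h; rw [← hpn, h] at hn; simp at hn
  rw [← hpn, Nat.cast_mul, Real.log_mul (Nat.cast_ne_zero.mpr h1) (Nat.cast_ne_zero.mpr h2)]
  ring

lemma log_pmul_zeta : (ArithmeticFunction.log).pmul (ζ : ArithmeticFunction ℝ)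
    = ArithmeticFunction.log := by
  ext n
  simp only [pmul_apply, natCoe_apply, zeta_apply, log_apply]
  split_ifs with h <;> simp [h]

lemma log_pmul_one : (ArithmeticFunction.log).pmul (1 : ArithmeticFunction ℝ) = 0 := by
  ext n
  simp only [pmul_apply, one_apply, log_apply, ArithmeticFunction.zero_apply]
  split_ifs with h <;> simp [h]

lemma log_pmul_moebius :
    (ArithmeticFunction.log).pmul (μ : ArithmeticFunction ℝ) = -(Λ * μ) := by
  have h := log_pmul_mul (μ : ArithmeticFunction ℝ) (ζ : ArithmeticFunction ℝ)
  rw [coe_moebius_mul_coe_zeta, log_pmul_one, log_pmul_zeta,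
    moebius_mul_log_eq_vonMangoldt] at h
  have h2 : (ArithmeticFunction.log).pmul (μ : ArithmeticFunction ℝ) * ζ = -Λ :=
    eq_neg_of_add_eq_zero_left h.symm
  calc (ArithmeticFunction.log).pmul (μ : ArithmeticFunction ℝ)
      = (ArithmeticFunction.log).pmul (μ : ArithmeticFunction ℝ) * (ζ * μ) := by
        rw [coe_zeta_mul_coe_moebius, mul_one]
    _ = ((ArithmeticFunction.log).pmul (μ : ArithmeticFunction ℝ) * ζ) * μ := by
        rw [mul_assoc]
    _ = -(Λ * μ) := by rw [h2]; ring

lemma log_pmul_vonMangoldt :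
    (ArithmeticFunction.log).pmul Λ + Λ * Λ
      = (μ : ArithmeticFunction ℝ) * ((ArithmeticFunction.log).pmul ArithmeticFunction.log) := by
  have h := log_pmul_mul (μ : ArithmeticFunction ℝ) ArithmeticFunction.log
  rw [moebius_mul_log_eq_vonMangoldt, log_pmul_moebius] at h
  have h3 : (Λ * (μ : ArithmeticFunction ℝ)) * ArithmeticFunction.log = Λ * Λ := by
    rw [mul_assoc, moebius_mul_log_eq_vonMangoldt]
  linear_combination h - h3

/-- Selberg's identity. -/
theorem selberg_identity (n : ℕ) (hn : 0 < n) :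
    Λ n * Real.log n + ∑ d ∈ n.divisors, Λ d * Λ (n / d)
      = ∑ d ∈ n.divisors, (moebius d : ℝ) * (Real.log ((n / d : ℕ) : ℝ)) ^ 2 := by
  have h := congrArg (fun f => f n) log_pmul_vonMangoldt
  simp only [ArithmeticFunction.add_apply, pmul_apply, log_apply, mul_apply] at h
  rw [Nat.sum_divisorsAntidiagonal (fun a b => Λ a * Λ b),
    Nat.sum_divisorsAntidiagonal
      (fun a b => ((μ : ArithmeticFunction ℝ) a : ℝ) * (Real.log b * Real.log b))] at h
  rw [mul_comm (Λ n)]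
  rw [h]
  refine Finset.sum_congr rfl fun d hd => ?_
  simp [intCoe_apply, sq]
end

section
/- The sums Σ_{n ≤ x} (μ(n)/n)·log(x/n) are bounded: there is a constant C such that |Σ_{n ≤ x} (μ(n)/n)·log(x/n)| ≤ C for all x ≥ 1, where the sum runs over positive integers n ≤ x. -/
open Real Finset ArithmeticFunction

lemma swap_sum_aux (N : ℕ) (f : ℕ → ℕ → ℝ) :
    ∑ n ∈ Finset.Icc 1 N, ∑ m ∈ Finset.Icc 1 (N / n), f n m
      = ∑ k ∈ Finset.Icc 1 N, ∑ p ∈ k.divisorsAntidiagonal, f p.1 p.2 := by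
  rw [Finset.sum_sigma', Finset.sum_sigma']
  refine Finset.sum_nbij' (fun p => ⟨p.1 * p.2, (p.1, p.2)⟩)
    (fun p => ⟨p.2.1, p.2.2⟩) ?_ ?_ ?_ ?_ ?_
  · rintro ⟨n, m⟩ h
    simp only [Finset.mem_sigma, Finset.mem_Icc] at h
    obtain ⟨⟨hn1, hnN⟩, hm1, hmN⟩ := h
    have hn0 : 0 < n := hn1
    have hmul : n * m ≤ N := (Nat.le_div_iff_mul_le hn0).mp hmN |>.trans_eq' (by ring)
    simp only [Finset.mem_sigma, Finset.mem_Icc, Nat.mem_divisorsAntidiagonal]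
    exact ⟨⟨Nat.mul_pos hn1 hm1, hmul⟩, trivial, by positivity⟩
  · rintro ⟨k, d, e⟩ h
    simp only [Finset.mem_sigma, Finset.mem_Icc, Nat.mem_divisorsAntidiagonal] at h
    obtain ⟨⟨hk1, hkN⟩, hde, hk0⟩ := h
    have hd0 : 0 < d := by
      rcases Nat.eq_zero_or_pos d with rfl | h; · simp at hde; omega
      exact h
    have he0 : 0 < e := by
      rcases Nat.eq_zero_or_pos e with rfl | h; · simp at hde; omega
      exact h
    simp only [Finset.mem_sigma, Finset.mem_Icc]
    refine ⟨⟨hd0, le_trans (Nat.le_of_dvd (by omega) ⟨e, hde.symm⟩) hkN⟩, he0, ?_⟩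
    rw [Nat.le_div_iff_mul_le hd0, mul_comm]
    omega
  · rintro ⟨n, m⟩ h; rfl
  · rintro ⟨k, d, e⟩ h
    simp only [Finset.mem_sigma, Finset.mem_Icc, Nat.mem_divisorsAntidiagonal] at h
    obtain ⟨_, hde, _⟩ := h
    simp [hde]
  · rintro ⟨n, m⟩ h; rfl

lemma sum_divisors_moebius_eq (k : ℕ) :
    (∑ d ∈ k.divisors, (moebius d : ℝ)) = if k = 1 then 1 else 0 := by
  have h : ((moebius : ArithmeticFunction ℝ) * zeta) k = (1 : ArithmeticFunction ℝ) k := by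
    rw [coe_moebius_mul_coe_zeta]
  rw [coe_mul_zeta_apply] at h
  simp only [intCoe_apply, ArithmeticFunction.one_apply] at h
  rw [← h]

lemma harmonic_cast_eq (k : ℕ) : ((harmonic k : ℚ) : ℝ) = ∑ m ∈ Finset.Icc 1 k, (m : ℝ)⁻¹ := by
  rw [harmonic_eq_sum_Icc]
  push_cast
  rfl

lemma key_identity (N : ℕ) (hN : 1 ≤ N) :
    ∑ n ∈ Finset.Icc 1 N, (moebius n : ℝ) / n * ((harmonic (N / n) : ℚ) : ℝ) = 1 := by
  have : ∀ n ∈ Finset.Icc 1 N, (moebius n : ℝ) / n * ((harmonic (N / n) : ℚ) : ℝ)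
      = ∑ m ∈ Finset.Icc 1 (N / n), (moebius n : ℝ) / n * (m : ℝ)⁻¹ := by
    intro n _
    rw [harmonic_cast_eq, Finset.mul_sum]
  rw [Finset.sum_congr rfl this, swap_sum_aux]
  have h2 : ∀ k ∈ Finset.Icc 1 N, (∑ p ∈ k.divisorsAntidiagonal, (moebius p.1 : ℝ) / p.1 * (p.2 : ℝ)⁻¹)
      = (k : ℝ)⁻¹ * (if k = 1 then 1 else 0) := by
    intro k hk
    simp only [Finset.mem_Icc] at hk
    have step : ∀ p ∈ k.divisorsAntidiagonal,
        (moebius p.1 : ℝ) / p.1 * (p.2 : ℝ)⁻¹ = (k : ℝ)⁻¹ * (moebius p.1 : ℝ) := by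
      rintro ⟨d, e⟩ hp
      rw [Nat.mem_divisorsAntidiagonal] at hp
      obtain ⟨hde, hk0⟩ := hp
      have hd0 : (0:ℝ) < d := by
        have : d ≠ 0 := by rintro rfl; simp at hde; omega
        positivity
      have he0 : (0:ℝ) < e := by
        have : e ≠ 0 := by rintro rfl; simp at hde; omega
        positivity
      have hkde : (k : ℝ) = (d : ℝ) * e := by exact_mod_cast hde.symm
      field_simp [hkde]
      rw [hkde]; ring
    rw [Finset.sum_congr rfl step, ← Finset.mul_sum,
      Nat.sum_divisorsAntidiagonal (fun d _ => (moebius d : ℝ)), sum_divisors_moebius_eq]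
  rw [Finset.sum_congr rfl h2]
  have : ∀ x ∈ Finset.Icc 1 N, ((x:ℝ)⁻¹ * if x = 1 then 1 else 0)
      = if x = 1 then (1:ℝ) else 0 := by
    intro x _; split_ifs with h <;> simp [h]
  rw [Finset.sum_congr rfl this, Finset.sum_ite_eq' (Finset.Icc 1 N) 1 (fun _ => (1:ℝ))]
  simp [hN]

lemma floor_identity (N : ℕ) (hN : 1 ≤ N) :
    ∑ n ∈ Finset.Icc 1 N, (moebius n : ℝ) * ((N / n : ℕ) : ℝ) = 1 := by
  have : ∀ n ∈ Finset.Icc 1 N, (moebius n : ℝ) * ((N / n : ℕ) : ℝ)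
      = ∑ m ∈ Finset.Icc 1 (N / n), (moebius n : ℝ) := by
    intro n _
    rw [Finset.sum_const, Nat.card_Icc]
    simp [nsmul_eq_mul, mul_comm]
  rw [Finset.sum_congr rfl this, swap_sum_aux]
  have h2 : ∀ k ∈ Finset.Icc 1 N, (∑ p ∈ k.divisorsAntidiagonal, (moebius p.1 : ℝ))
      = if k = 1 then 1 else 0 := by
    intro k hk
    rw [← sum_divisors_moebius_eq]
    exact Nat.sum_divisorsAntidiagonal (fun d e => (moebius d : ℝ))
  rw [Finset.sum_congr rfl h2, Finset.sum_ite_eq' (Finset.Icc 1 N) 1 (fun _ => (1:ℝ))]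
  simp [hN]

lemma abs_moebius_le_one (n : ℕ) : |(moebius n : ℝ)| ≤ 1 := by
  rcases moebius_eq_or n with h | h | h <;> simp [h]

lemma mu_div_bound (N : ℕ) (hN : 1 ≤ N) :
    |∑ n ∈ Finset.Icc 1 N, (moebius n : ℝ) / n| ≤ 2 := by
  have hN0 : (0:ℝ) < N := by exact_mod_cast hN
  have key : (N:ℝ) * ∑ n ∈ Finset.Icc 1 N, (moebius n : ℝ) / n
      = 1 + ∑ n ∈ Finset.Icc 1 N, (moebius n : ℝ) * ((N:ℝ)/n - ((N / n : ℕ) : ℝ)) := by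
    rw [Finset.mul_sum, ← floor_identity N hN, ← Finset.sum_add_distrib]
    refine Finset.sum_congr rfl fun n hn => ?_
    ring
  have hterm : ∀ n ∈ Finset.Icc 1 N,
      |(moebius n : ℝ) * ((N:ℝ)/n - ((N / n : ℕ) : ℝ))| ≤ 1 := by
    intro n hn
    simp only [Finset.mem_Icc] at hn
    have hn0 : (0:ℝ) < n := by exact_mod_cast hn.1
    have hfl : ((N / n : ℕ) : ℝ) = (⌊(N:ℝ)/n⌋₊ : ℝ) := by
      rw [Nat.floor_div_natCast, Nat.floor_natCast]
    have h1 : ((N / n : ℕ) : ℝ) ≤ (N:ℝ)/n := by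
      rw [hfl]; exact Nat.floor_le (by positivity)
    have h2 : (N:ℝ)/n ≤ ((N / n : ℕ) : ℝ) + 1 := by
      rw [hfl]; exact le_of_lt (Nat.lt_floor_add_one _)
    rw [abs_mul]
    calc |(moebius n : ℝ)| * |(N:ℝ)/n - ((N / n : ℕ) : ℝ)|
        ≤ 1 * 1 := by
          apply mul_le_mul (abs_moebius_le_one n) ?_ (abs_nonneg _) zero_le_one
          rw [abs_le]; constructor <;> linarith
      _ = 1 := one_mul 1
  have hsum : |∑ n ∈ Finset.Icc 1 N, (moebius n : ℝ) * ((N:ℝ)/n - ((N / n : ℕ) : ℝ))| ≤ N := by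
    calc |∑ n ∈ Finset.Icc 1 N, (moebius n : ℝ) * ((N:ℝ)/n - ((N / n : ℕ) : ℝ))|
        ≤ ∑ n ∈ Finset.Icc 1 N, |(moebius n : ℝ) * ((N:ℝ)/n - ((N / n : ℕ) : ℝ))| :=
          Finset.abs_sum_le_sum_abs _ _
      _ ≤ ∑ n ∈ Finset.Icc 1 N, (1:ℝ) := Finset.sum_le_sum hterm
      _ = N := by simp [Nat.card_Icc]
  have : |(N:ℝ) * ∑ n ∈ Finset.Icc 1 N, (moebius n : ℝ) / n| ≤ 1 + N := by
    rw [key]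
    calc |1 + ∑ n ∈ Finset.Icc 1 N, (moebius n : ℝ) * ((N:ℝ)/n - ((N / n : ℕ) : ℝ))|
        ≤ 1 + |∑ n ∈ Finset.Icc 1 N, (moebius n : ℝ) * ((N:ℝ)/n - ((N / n : ℕ) : ℝ))| := by
          refine (abs_add_le _ _).trans ?_; simp
      _ ≤ 1 + N := by linarith
  rw [abs_mul, abs_of_pos hN0] at this
  have h1N : (1:ℝ) ≤ N := by exact_mod_cast hN
  rw [← le_div_iff₀' hN0] at this
  refine this.trans ?_
  rw [div_le_iff₀ hN0]
  linarith

lemma log_sub_harmonic_bound (t : ℝ) (ht : 1 ≤ t) :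
    |Real.log t - ((harmonic ⌊t⌋₊ : ℚ) : ℝ) + Real.eulerMascheroniConstant| ≤ 2 / t := by
  set k : ℕ := ⌊t⌋₊ with hk
  have hk1 : 1 ≤ k := Nat.one_le_floor_iff t |>.mpr ht
  have hk0 : (0:ℝ) < k := by exact_mod_cast hk1
  have hkt : (k:ℝ) ≤ t := Nat.floor_le (by linarith)
  have htk : t < k + 1 := Nat.lt_floor_add_one t
  have hupper : Real.eulerMascheroniConstant < ((harmonic k : ℚ) : ℝ) - Real.log k := by
    have := Real.eulerMascheroniConstant_lt_eulerMascheroniSeq' k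
    rwa [Real.eulerMascheroniSeq', if_neg (by omega)] at this
  have hlower : ((harmonic k : ℚ) : ℝ) - Real.log (k + 1) < Real.eulerMascheroniConstant :=
    Real.eulerMascheroniSeq_lt_eulerMascheroniConstant k
  have hlog1 : Real.log t ≤ Real.log (k + 1) := Real.log_le_log (by linarith) (by linarith)
  have hlog2 : Real.log k ≤ Real.log t := Real.log_le_log hk0 hkt
  have hlogdiff : Real.log (k + 1) - Real.log k ≤ 1 / k := by
    rw [← Real.log_div (by positivity) (by positivity)]
    have := Real.log_le_sub_one_of_pos (show (0:ℝ) < ((k:ℝ)+1)/k by positivity)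
    refine this.trans ?_
    rw [add_div, div_self (ne_of_gt hk0)]
    simp
  have hkratio : 1 / (k:ℝ) ≤ 2 / t := by
    rw [div_le_div_iff₀ (by positivity) (by linarith)]
    have : (k:ℝ) + 1 ≤ 2 * k := by
      have : (1:ℝ) ≤ k := by exact_mod_cast hk1
      linarith
    linarith
  rw [abs_le]
  constructor
  · have : -(1/(k:ℝ)) ≤ Real.log t - ((harmonic k : ℚ) : ℝ) + Real.eulerMascheroniConstant := by
      nlinarith [hlower, hlog2, hlogdiff]
    linarith [hkratio]
  · have : Real.log t - ((harmonic k : ℚ) : ℝ) + Real.eulerMascheroniConstant ≤ 1/(k:ℝ) := by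
      nlinarith [hupper, hlog1, hlogdiff]
    linarith [hkratio]

theorem moebius_div_log_sum_bounded :
    ∃ C : ℝ, ∀ x : ℝ, 1 ≤ x →
      |∑ n ∈ Finset.Icc 1 ⌊x⌋₊, (moebius n : ℝ) / n * Real.log (x / n)| ≤ C := by
  use 5
  intro x hx
  set N : ℕ := ⌊x⌋₊ with hN
  have hN1 : 1 ≤ N := Nat.one_le_floor_iff x |>.mpr hx
  have hx0 : (0:ℝ) < x := by linarith
  have hNx : (N:ℝ) ≤ x := Nat.floor_le (by linarith)
  set γ : ℝ := Real.eulerMascheroniConstant with hγ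
  have hγabs : |γ| ≤ 1 := by
    rw [abs_le]
    constructor
    · linarith [Real.one_half_lt_eulerMascheroniConstant]
    · linarith [Real.eulerMascheroniConstant_lt_two_thirds]
  have hsplit : ∀ n ∈ Finset.Icc 1 N,
      (moebius n : ℝ) / n * Real.log (x / n)
        = (moebius n : ℝ) / n * (Real.log (x/n) - ((harmonic (N / n) : ℚ) : ℝ) + γ)
          + (moebius n : ℝ) / n * ((harmonic (N / n) : ℚ) : ℝ)
          - γ * ((moebius n : ℝ) / n) := by
    intro n _
    ring
  rw [Finset.sum_congr rfl hsplit]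
  rw [Finset.sum_sub_distrib, Finset.sum_add_distrib, key_identity N hN1, ← Finset.mul_sum]
  have hErr : |∑ n ∈ Finset.Icc 1 N,
      (moebius n : ℝ) / n * (Real.log (x/n) - ((harmonic (N / n) : ℚ) : ℝ) + γ)| ≤ 2 := by
    have hterm : ∀ n ∈ Finset.Icc 1 N,
        |(moebius n : ℝ) / n * (Real.log (x/n) - ((harmonic (N / n) : ℚ) : ℝ) + γ)| ≤ 2 / x := by
      intro n hn
      simp only [Finset.mem_Icc] at hn
      have hn0 : (0:ℝ) < n := by exact_mod_cast hn.1
      have hnN : (n:ℝ) ≤ N := by exact_mod_cast hn.2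
      have hxn1 : 1 ≤ x / n := by
        rw [le_div_iff₀ hn0]; linarith
      have hfl : N / n = ⌊x / n⌋₊ := by
        rw [Nat.floor_div_natCast, hN]
      have hb := log_sub_harmonic_bound (x/n) hxn1
      rw [← hfl] at hb
      rw [abs_mul, abs_div]
      have h1 : |(moebius n : ℝ)| / |(n:ℝ)| ≤ 1 / n := by
        rw [abs_of_pos hn0]
        exact div_le_div_of_nonneg_right (abs_moebius_le_one n) hn0.le
      calc |(moebius n : ℝ)| / |(n:ℝ)| * |Real.log (x/n) - ((harmonic (N / n) : ℚ) : ℝ) + γ|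
          ≤ (1/n) * (2 / (x/n)) := by
            apply mul_le_mul h1 hb (abs_nonneg _) (by positivity)
        _ = 2 / x := by field_simp
    calc |∑ n ∈ Finset.Icc 1 N,
          (moebius n : ℝ) / n * (Real.log (x/n) - ((harmonic (N / n) : ℚ) : ℝ) + γ)|
        ≤ ∑ n ∈ Finset.Icc 1 N, |(moebius n : ℝ) / n * (Real.log (x/n) - ((harmonic (N / n) : ℚ) : ℝ) + γ)| :=
          Finset.abs_sum_le_sum_abs _ _
      _ ≤ ∑ n ∈ Finset.Icc 1 N, (2/x) := Finset.sum_le_sum hterm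
      _ = N * (2/x) := by simp [Nat.card_Icc, mul_comm]
      _ ≤ x * (2/x) := by
          apply mul_le_mul_of_nonneg_right hNx (by positivity)
      _ = 2 := by field_simp
  have hMu : |γ * ∑ n ∈ Finset.Icc 1 N, (moebius n : ℝ) / n| ≤ 2 := by
    rw [abs_mul]
    calc |γ| * |∑ n ∈ Finset.Icc 1 N, (moebius n : ℝ) / n|
        ≤ 1 * 2 := mul_le_mul hγabs (mu_div_bound N hN1) (abs_nonneg _) zero_le_one
      _ = 2 := one_mul 2
  calc |∑ n ∈ Finset.Icc 1 N,
        (moebius n : ℝ) / n * (Real.log (x/n) - ((harmonic (N / n) : ℚ) : ℝ) + γ) + 1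
        - γ * ∑ n ∈ Finset.Icc 1 N, (moebius n : ℝ) / n|
      ≤ |∑ n ∈ Finset.Icc 1 N,
          (moebius n : ℝ) / n * (Real.log (x/n) - ((harmonic (N / n) : ℚ) : ℝ) + γ)| + 1
        + |γ * ∑ n ∈ Finset.Icc 1 N, (moebius n : ℝ) / n| := by
        refine (abs_sub _ _).trans ?_
        gcongr
        refine (abs_add_le _ _).trans ?_
        simp
    _ ≤ 2 + 1 + 2 := by gcongr
    _ = 5 := by norm_num
end

section
/- Let s : [0,∞) → ℝ be a function and M, M' ≥ 0 constants such that (1) e^{t'}·s(t') − e^{t}·s(t) ≥ −M·(e^{t'} − e^{t}) for all t' ≥ t ≥ 0, and (2) |∫_0^x s(t) dt| ≤ M' for all x ≥ 0. If S := limsup_{t→∞} |s(t)| satisfies S > 0, then there exist real numbers S₁ with 0 < S₁ < S and e, h > 0 such that for every x ≥ 0 the set E_{x,h,S₁} = { t ∈ [x, x+h] : |s(t)| ≤ S₁ } has Lebesgue measure at least e. -/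
open Filter Real MeasureTheory

lemma measure_aux (σ : ℝ → ℝ) (M M' S₁ : ℝ) (hM : 0 ≤ M) (hM' : 0 ≤ M') (hS₁ : 0 < S₁)
    (hmeas : Measurable σ)
    (hint : ∀ a b : ℝ, IntervalIntegrable σ volume a b)
    (henv : ∀ u t : ℝ, 0 ≤ u → u ≤ t → Real.exp (u - t) * (σ u + M) - M ≤ σ t)
    (h2 : ∀ x : ℝ, 0 ≤ x → |∫ t in (0:ℝ)..x, σ t| ≤ M') :
    ∃ e h : ℝ, 0 < e ∧ 0 < h ∧ ∀ x : ℝ, 0 ≤ x →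
      ENNReal.ofReal e ≤ volume {t ∈ Set.Icc x (x + h) | |σ t| ≤ S₁} := by
  set τ : ℝ := if S₁ < M then Real.log (M / (M - S₁)) else 1 with hτdef
  have hτpos : 0 < τ := by
    rw [hτdef]
    split_ifs with hc
    · apply Real.log_pos
      rw [lt_div_iff₀ (by linarith)]
      linarith
    · norm_num
  refine ⟨min τ 1, 4 * M' / S₁ + 3, lt_min hτpos one_pos, by positivity, ?_⟩
  set h : ℝ := 4 * M' / S₁ + 3 with hhdef
  have hh0 : 0 < h := by positivity
  intro x hx
  set W : Set ℝ := Set.Icc x (x + h) with hWdef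
  set E : Set ℝ := {t ∈ W | |σ t| ≤ S₁} with hEdef
  by_cases hP : ∃ t1 ∈ W, ∃ t2 ∈ W, t1 < t2 ∧ 0 ≤ σ t1 ∧ σ t2 < -S₁
  · -- Case P : slow-decay transition gives an interval of small values
    obtain ⟨t1, ht1W, t2, ht2W, hlt, hσ1, hσ2⟩ := hP
    have ht1x : x ≤ t1 := ht1W.1
    have ht10 : (0:ℝ) ≤ t1 := le_trans hx ht1x
    have hSM : S₁ < M := by
      by_contra hcon
      push_neg at hcon
      have := henv t1 t2 ht10 hlt.le
      nlinarith [Real.exp_pos (t1 - t2)]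
    have hM0 : 0 < M := lt_trans hS₁ hSM
    have hτeq : τ = Real.log (M / (M - S₁)) := by rw [hτdef, if_pos hSM]
    have hτM : Real.exp (-τ) * M = M - S₁ := by
      have hpos : 0 < M / (M - S₁) := by
        apply div_pos hM0; linarith
      rw [hτeq, Real.exp_neg, Real.exp_log hpos]
      field_simp
    set A : Set ℝ := {u ∈ Set.Icc t1 t2 | 0 ≤ σ u} with hAdef
    have hAne : A.Nonempty := ⟨t1, ⟨Set.left_mem_Icc.2 hlt.le, hσ1⟩⟩
    have hAbdd : BddAbove A := ⟨t2, fun u hu => hu.1.2⟩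
    set v : ℝ := sSup A with hvdef
    have hv1 : t1 ≤ v := le_csSup hAbdd ⟨Set.left_mem_Icc.2 hlt.le, hσ1⟩
    have hv2 : v ≤ t2 := csSup_le hAne (fun u hu => hu.1.2)
    -- key estimate for points within τ to the right of some point of A
    have hkey : ∀ t : ℝ, v ≤ t → t - τ < v → Real.exp (-τ) * M - M < σ t := by
      intro t hvt ht
      obtain ⟨u, hu, hut⟩ := exists_lt_of_lt_csSup hAne ht
      have hu0 : (0:ℝ) ≤ u := le_trans ht10 hu.1.1
      have huv : u ≤ v := le_csSup hAbdd hu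
      have hut' : u ≤ t := le_trans huv hvt
      have := henv u t hu0 hut'
      have hexp : Real.exp (-τ) < Real.exp (u - t) := Real.exp_lt_exp.2 (by linarith)
      nlinarith [Real.exp_pos (u - t), hu.2]
    have hvt2 : v + τ ≤ t2 := by
      by_contra hcc
      push_neg at hcc
      have := hkey t2 hv2 (by linarith)
      nlinarith
    have hneg : ∀ t, v < t → t ≤ t2 → σ t < 0 := by
      intro t hvt htt2
      by_contra hcc
      push_neg at hcc
      have : t ∈ A := ⟨⟨by linarith, htt2⟩, hcc⟩
      have := le_csSup hAbdd this
      linarith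
    have hsub : Set.Ioo v (v + τ) ⊆ E := by
      intro t ht
      have h1 : σ t < 0 := hneg t ht.1 (by linarith [ht.2])
      have h2 : -S₁ < σ t := by
        have := hkey t ht.1.le (by linarith [ht.2])
        linarith [hτM]
      constructor
      · exact ⟨by linarith [ht1W.1, ht.1, hv1], by linarith [ht2W.2, ht.2, hvt2]⟩
      · rw [abs_le]; constructor <;> linarith
    calc ENNReal.ofReal (min τ 1) ≤ ENNReal.ofReal τ :=
          ENNReal.ofReal_le_ofReal (min_le_left _ _)
      _ = volume (Set.Ioo v (v + τ)) := by rw [Real.volume_Ioo]; ring_nf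
      _ ≤ volume E := measure_mono hsub
  · -- Case Q : integral bounds force a large set of small values
    push_neg at hP
    set B : Set ℝ := insert x {u ∈ W | σ u < -S₁} with hBdef
    have hBne : B.Nonempty := ⟨x, Set.mem_insert _ _⟩
    have hBsub : ∀ u ∈ B, u ≤ x + h := by
      rintro u (rfl | hu)
      · linarith
      · exact hu.1.2
    have hBbdd : BddAbove B := ⟨x + h, hBsub⟩
    set c : ℝ := sSup B with hcdef
    have hxc : x ≤ c := le_csSup hBbdd (Set.mem_insert _ _)
    have hcxh : c ≤ x + h := csSup_le hBne hBsub
    have hneg : ∀ t, x ≤ t → t < c → σ t < 0 := by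
      intro t hxt htc
      obtain ⟨u, hu, htu⟩ := exists_lt_of_lt_csSup hBne htc
      rcases hu with rfl | hu
      · linarith
      · by_contra hcc
        push_neg at hcc
        have := hP t ⟨hxt, by linarith [hu.1.2]⟩ u hu.1 htu hcc
        linarith [hu.2]
    have hpos : ∀ t, c < t → t ≤ x + h → -S₁ ≤ σ t := by
      intro t hct hth
      by_contra hcc
      push_neg at hcc
      have htB : t ∈ B := Set.mem_insert_of_mem _ ⟨⟨le_trans hxc hct.le, hth⟩, hcc⟩
      linarith [le_csSup hBbdd htB]
    -- measurability and finiteness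
    have hG : MeasurableSet {t : ℝ | |σ t| ≤ S₁} := measurableSet_le hmeas.abs measurable_const
    set G : Set ℝ := {t : ℝ | |σ t| ≤ S₁} with hGdef
    have hEmeas : MeasurableSet E := measurableSet_Icc.inter hG
    have hEfin : volume E ≠ ⊤ := by
      refine ne_top_of_le_ne_top ?_ (measure_mono (Set.sep_subset _ _))
      simp only [hWdef, Real.volume_Icc]
      exact ENNReal.ofReal_ne_top
    set m : ℝ := (volume E).toReal with hmdef
    have hm0 : 0 ≤ m := ENNReal.toReal_nonneg
    -- window integral bound
    have hwin : ∀ a b : ℝ, 0 ≤ a → a ≤ b → |∫ t in a..b, σ t| ≤ 2 * M' := by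
      intro a b ha hab
      have hadj := intervalIntegral.integral_add_adjacent_intervals (μ := volume)
        (hint 0 a) (hint a b)
      have hb1 := h2 a ha
      have hb2 := h2 b (le_trans ha hab)
      have heq : ∫ t in a..b, σ t = (∫ t in (0:ℝ)..b, σ t) - ∫ t in (0:ℝ)..a, σ t := by
        linarith
      rw [heq]
      exact le_trans (abs_sub _ _) (by linarith)
    -- estimate on [x, c]
    have key1 : S₁ * (c - x) ≤ 2 * M' + S₁ * m := by
      have hIeq : ∫ t in x..c, σ t = ∫ t in Set.Ioo x c, σ t := by
        rw [intervalIntegral.integral_of_le hxc, integral_Ioc_eq_integral_Ioo]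
      have hintOn : IntegrableOn σ (Set.Ioo x c) := (hint x c).1.mono_set Set.Ioo_subset_Ioc_self
      have hsplit := integral_inter_add_diff (t := G) (f := σ) hG hintOn
      have hI1 : ∫ t in Set.Ioo x c ∩ G, σ t ≤ 0 := by
        apply setIntegral_nonpos (measurableSet_Ioo.inter hG)
        intro t ht
        exact (hneg t ht.1.1.le ht.1.2).le
      have hI2 : ∫ t in Set.Ioo x c \ G, σ t ≤ (volume (Set.Ioo x c \ G)).toReal * (-S₁) := by
        have := setIntegral_mono_on (hintOn.mono_set Set.diff_subset)
          (integrableOn_const (ne_of_lt (lt_of_le_of_lt (measure_mono Set.diff_subset)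
            (by simp [Real.volume_Ioo]))))
          (measurableSet_Ioo.diff hG) (g := fun _ => -S₁) ?_
        · simpa [setIntegral_const, measureReal_def] using this
        · intro t ht
          show σ t ≤ -S₁
          have h1 : σ t < 0 := hneg t ht.1.1.le ht.1.2
          have h2 : ¬ |σ t| ≤ S₁ := ht.2
          push_neg at h2
          rw [abs_of_neg h1] at h2
          linarith
      -- measures
      have hfin1 : volume (Set.Ioo x c ∩ G) ≠ ⊤ :=
        ne_top_of_le_ne_top (by simp [Real.volume_Ioo]) (measure_mono Set.inter_subset_left)
      have hfin2 : volume (Set.Ioo x c \ G) ≠ ⊤ :=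
        ne_top_of_le_ne_top (by simp [Real.volume_Ioo]) (measure_mono Set.diff_subset)
      have hsum : (volume (Set.Ioo x c ∩ G)).toReal + (volume (Set.Ioo x c \ G)).toReal
          = c - x := by
        rw [← ENNReal.toReal_add hfin1 hfin2, measure_inter_add_diff _ hG, Real.volume_Ioo,
          ENNReal.toReal_ofReal (by linarith)]
      have hml : (volume (Set.Ioo x c ∩ G)).toReal ≤ m := by
        apply ENNReal.toReal_mono hEfin
        apply measure_mono
        intro t ht
        exact ⟨⟨ht.1.1.le, le_trans ht.1.2.le hcxh⟩, ht.2⟩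
      have hlow : -(2 * M') ≤ ∫ t in x..c, σ t := neg_le_of_abs_le (hwin x c hx hxc)
      rw [hIeq, ← hsplit] at hlow
      nlinarith [hS₁.le]
    -- estimate on [c, x + h]
    have key2 : S₁ * (x + h - c) ≤ 2 * M' + 2 * (S₁ * m) := by
      have hIeq : ∫ t in c..(x+h), σ t = ∫ t in Set.Ioo c (x+h), σ t := by
        rw [intervalIntegral.integral_of_le hcxh, integral_Ioc_eq_integral_Ioo]
      have hintOn : IntegrableOn σ (Set.Ioo c (x+h)) :=
        (hint c (x+h)).1.mono_set Set.Ioo_subset_Ioc_self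
      have hsplit := integral_inter_add_diff (t := G) (f := σ) hG hintOn
      have hI1 : (volume (Set.Ioo c (x+h) ∩ G)).toReal * (-S₁)
          ≤ ∫ t in Set.Ioo c (x+h) ∩ G, σ t := by
        have := setIntegral_mono_on
          (integrableOn_const (ne_of_lt (lt_of_le_of_lt (measure_mono Set.inter_subset_left)
            (by simp [Real.volume_Ioo]))))
          (hintOn.mono_set Set.inter_subset_left)
          (measurableSet_Ioo.inter hG) (f := fun _ => -S₁) ?_
        · simpa [setIntegral_const, measureReal_def] using this
        · intro t ht
          show -S₁ ≤ σ t
          exact neg_le_of_abs_le (by simpa [hGdef] using ht.2)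
      have hI2 : (volume (Set.Ioo c (x+h) \ G)).toReal * S₁
          ≤ ∫ t in Set.Ioo c (x+h) \ G, σ t := by
        have := setIntegral_mono_on
          (integrableOn_const (ne_of_lt (lt_of_le_of_lt (measure_mono Set.diff_subset)
            (by simp [Real.volume_Ioo]))))
          (hintOn.mono_set Set.diff_subset)
          (measurableSet_Ioo.diff hG) (f := fun _ => S₁) ?_
        · simpa [setIntegral_const, measureReal_def] using this
        · intro t ht
          show S₁ ≤ σ t
          have h1 : -S₁ ≤ σ t := hpos t ht.1.1 ht.1.2.le
          have h2 : ¬ |σ t| ≤ S₁ := ht.2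
          push_neg at h2
          rcases le_or_gt (σ t) S₁ with hle | hlt
          · exact absurd (abs_le.mpr ⟨h1, hle⟩) (by linarith)
          · exact hlt.le
      have hfin1 : volume (Set.Ioo c (x+h) ∩ G) ≠ ⊤ :=
        ne_top_of_le_ne_top (by simp [Real.volume_Ioo]) (measure_mono Set.inter_subset_left)
      have hfin2 : volume (Set.Ioo c (x+h) \ G) ≠ ⊤ :=
        ne_top_of_le_ne_top (by simp [Real.volume_Ioo]) (measure_mono Set.diff_subset)
      have hsum : (volume (Set.Ioo c (x+h) ∩ G)).toReal + (volume (Set.Ioo c (x+h) \ G)).toReal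
          = x + h - c := by
        rw [← ENNReal.toReal_add hfin1 hfin2, measure_inter_add_diff _ hG, Real.volume_Ioo,
          ENNReal.toReal_ofReal (by linarith)]
      have hml : (volume (Set.Ioo c (x+h) ∩ G)).toReal ≤ m := by
        apply ENNReal.toReal_mono hEfin
        apply measure_mono
        intro t ht
        exact ⟨⟨le_trans hxc ht.1.1.le, ht.1.2.le⟩, ht.2⟩
      have hup : ∫ t in c..(x+h), σ t ≤ 2 * M' :=
        le_of_abs_le (hwin c (x+h) (le_trans hx hxc) hcxh)
      rw [hIeq, ← hsplit] at hup
      nlinarith [hS₁.le]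
    -- conclude m ≥ 1
    have hm1 : 1 ≤ m := by
      have hSh : S₁ * h = 4 * M' + 3 * S₁ := by
        rw [hhdef]
        field_simp
      nlinarith
    calc ENNReal.ofReal (min τ 1) ≤ ENNReal.ofReal m :=
          ENNReal.ofReal_le_ofReal (le_trans (min_le_right _ _) hm1)
      _ = volume E := ENNReal.ofReal_toReal hEfin

theorem measure_of_small_values
    (s : ℝ → ℝ) (M M' : ℝ) (hM : 0 ≤ M) (hM' : 0 ≤ M')
    (h1 : ∀ t t' : ℝ, 0 ≤ t → t ≤ t' →
      -M * (Real.exp t' - Real.exp t) ≤ Real.exp t' * s t' - Real.exp t * s t)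
    (h2 : ∀ x : ℝ, 0 ≤ x → |∫ t in (0:ℝ)..x, s t| ≤ M')
    (hS : 0 < limsup (fun t : ℝ => |s t|) atTop) :
    ∃ S₁ e h : ℝ, 0 < S₁ ∧ S₁ < limsup (fun t : ℝ => |s t|) atTop ∧
      0 < e ∧ 0 < h ∧
      ∀ x : ℝ, 0 ≤ x →
        ENNReal.ofReal e ≤ volume {t ∈ Set.Icc x (x + h) | |s t| ≤ S₁} := by
  set S : ℝ := limsup (fun t : ℝ => |s t|) atTop with hSdef
  set g : ℝ → ℝ := fun t => Real.exp t * (s t + M) with hgdef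
  have hgmono : Monotone (fun t => g (max t 0)) := by
    intro a b hab
    simp only [hgdef]
    have h0a : (0:ℝ) ≤ max a 0 := le_max_right _ _
    have hmm : max a 0 ≤ max b 0 := max_le_max hab le_rfl
    have := h1 (max a 0) (max b 0) h0a hmm
    nlinarith [this]
  set σ : ℝ → ℝ := fun t => Real.exp (-t) * g (max t 0) - M with hσdef
  have hσeq : ∀ t : ℝ, 0 ≤ t → σ t = s t := by
    intro t ht
    simp only [hσdef, hgdef, max_eq_left ht]
    rw [← mul_assoc, ← Real.exp_add]
    simp
  have hσm : Measurable σ :=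
    ((Real.measurable_exp.comp measurable_neg).mul hgmono.measurable).sub measurable_const
  have hint : ∀ a b : ℝ, IntervalIntegrable σ volume a b := by
    intro a b
    apply IntervalIntegrable.sub _ intervalIntegrable_const
    exact ((hgmono.monotoneOn _).intervalIntegrable).continuousOn_mul
      ((Real.continuous_exp.comp continuous_neg).continuousOn)
  have henv : ∀ u t : ℝ, 0 ≤ u → u ≤ t → Real.exp (u - t) * (σ u + M) - M ≤ σ t := by
    intro u t hu hut
    rw [hσeq u hu, hσeq t (le_trans hu hut)]
    have hh := h1 u t hu hut
    have hexpt := Real.exp_pos t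
    rw [Real.exp_sub, div_mul_eq_mul_div, sub_le_iff_le_add, div_le_iff₀ hexpt]
    nlinarith [hh]
  have h2' : ∀ x : ℝ, 0 ≤ x → |∫ t in (0:ℝ)..x, σ t| ≤ M' := by
    intro x hx
    have heq : ∫ t in (0:ℝ)..x, σ t = ∫ t in (0:ℝ)..x, s t := by
      apply intervalIntegral.integral_congr
      intro t ht
      rw [Set.uIcc_of_le hx] at ht
      exact hσeq t ht.1
    rw [heq]
    exact h2 x hx
  have hS2 : 0 < S / 2 := by linarith
  obtain ⟨e, h, he, hh, hmain⟩ := measure_aux σ M M' (S / 2) hM hM' hS2 hσm hint henv h2'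
  refine ⟨S / 2, e, h, hS2, by linarith, he, hh, ?_⟩
  intro x hx
  have hset : {t ∈ Set.Icc x (x + h) | |s t| ≤ S / 2}
      = {t ∈ Set.Icc x (x + h) | |σ t| ≤ S / 2} := by
    ext t
    constructor
    · rintro ⟨htW, hts⟩
      exact ⟨htW, by rw [hσeq t (le_trans hx htW.1)]; exact hts⟩
    · rintro ⟨htW, hts⟩
      exact ⟨htW, by rw [← hσeq t (le_trans hx htW.1)]; exact hts⟩
  rw [hset]
  exact hmain x hx
end
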